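/- arXiv:1612.09034 — 6 statements merged into one kernel-verified Lean document; each statement's English description precedes it below -/
import Mathlib

section
/- Fix centers x_A, x_B in ℝ^n and squared radii r_A² > 0, r_B² > 0, and fix ε ∈ (0,1). Suppose ‖x_A − x_B‖² ≥ r_B². Then there exists a point c ∈ ℝ^n such that for every δ > 0 one has B(x_A, r_A² − ε·r_B² − δ) ∩ B(x_B, (1−ε)·r_B² − δ) ⊆ B(c, (1−√ε)·r_A² − δ). -/
/-- The ball `B(c, r²) = {y : ‖y − c‖² ≤ r²}` (empty when `r² < 0`). -/
def B {n : ℕ} (c : EuclideanSpace ℝ (Fin n)) (r2 : ℝ) : Set (EuclideanSpace ℝ (Fin n)) :=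
  {y | ‖y - c‖ ^ 2 ≤ r2}

lemma convex_norm_sq_identity {n : ℕ} (a b : EuclideanSpace ℝ (Fin n)) (t : ℝ) :
    ‖(1 - t) • a + t • b‖ ^ 2
      = (1 - t) * ‖a‖ ^ 2 + t * ‖b‖ ^ 2 - t * (1 - t) * ‖b - a‖ ^ 2 := by
  have h1 : ∀ v : EuclideanSpace ℝ (Fin n), ‖v‖ ^ 2 = inner ℝ v v := by
    intro v; rw [real_inner_self_eq_norm_sq]
  rw [h1, h1, h1, h1]
  simp only [inner_add_add_self, inner_sub_sub_self, inner_smul_left, inner_smul_right,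
    RCLike.conj_to_real, real_inner_comm a b]
  ring

/-- minimum enclosing ball lemma. -/
theorem stmt_0 (n : ℕ) (xA xB : EuclideanSpace ℝ (Fin n)) (rA2 rB2 ε : ℝ)
    (hrA : 0 < rA2) (hrB : 0 < rB2) (hε : ε ∈ Set.Ioo (0 : ℝ) 1)
    (hdist : ‖xA - xB‖ ^ 2 ≥ rB2) :
    ∃ c : EuclideanSpace ℝ (Fin n), ∀ δ : ℝ, 0 < δ →
      B xA (rA2 - ε * rB2 - δ) ∩ B xB ((1 - ε) * rB2 - δ)
        ⊆ B c ((1 - Real.sqrt ε) * rA2 - δ) := by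
  obtain ⟨hε0, hε1⟩ := hε
  set t := Real.sqrt ε with ht
  have ht0 : 0 ≤ t := Real.sqrt_nonneg ε
  have ht2 : t ^ 2 = ε := Real.sq_sqrt hε0.le
  have ht1 : t ≤ 1 := by nlinarith
  refine ⟨(1 - t) • xA + t • xB, fun δ hδ y hy => ?_⟩
  obtain ⟨hA, hB⟩ := hy
  simp only [B, Set.mem_setOf_eq] at hA hB ⊢
  have hkey : y - ((1 - t) • xA + t • xB) = (1 - t) • (y - xA) + t • (y - xB) := by
    module
  rw [hkey, convex_norm_sq_identity]
  have heq : (y - xB) - (y - xA) = xA - xB := by module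
  rw [heq]
  nlinarith [norm_nonneg (y - xA), norm_nonneg (y - xB), sq_nonneg (‖y - xA‖),
    mul_nonneg (mul_nonneg ht0 (sub_nonneg.2 ht1)) (sub_nonneg.2 (le_of_lt (lt_of_lt_of_le hrB (le_of_eq rfl)))),
    mul_le_mul_of_nonneg_left hdist (mul_nonneg ht0 (sub_nonneg.2 ht1))]
end

section
/- For every x, y ∈ ℝ^n and every step size t ∈ (0, 1/β], one has F(y) ≥ F(x⁺) + ⟨G_t(x), y − x⟩ + (t/2)·‖G_t(x)‖² + (α/2)·‖y − x‖². -/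
open scoped RealInnerProductSpace

section Aux
variable {E : Type*} [NormedAddCommGroup E] [InnerProductSpace ℝ E] [CompleteSpace E]


lemma fderiv_apply_eq_inner_gradient (f : E → ℝ) (z w : E) :
    fderiv ℝ f z w = ⟪gradient f z, w⟫ := by
  rw [gradient, InnerProductSpace.toDual_symm_apply]

lemma hasDerivAt_line (f : E → ℝ) (hf : Differentiable ℝ f) (x d : E) (s : ℝ) :
    HasDerivAt (fun s : ℝ => f (x + s • d)) ⟪gradient f (x + s • d), d⟫ s := by
  have hline : HasDerivAt (fun s : ℝ => x + s • d) d s := by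
    simpa using ((hasDerivAt_id s).smul_const d).const_add x
  have := ((hf (x + s • d)).hasFDerivAt).comp_hasDerivAt s hline
  rw [fderiv_apply_eq_inner_gradient] at this
  exact this

lemma convex_tangent (g : E → ℝ) (hg : ConvexOn ℝ Set.univ g) (hdg : Differentiable ℝ g)
    (x y : E) : ⟪gradient g x, y - x⟫ ≤ g y - g x := by
  set φ : ℝ → ℝ := fun s => g (x + s • (y - x)) with hφ
  have hφc : ConvexOn ℝ Set.univ φ := by
    have := hg.comp_affineMap (AffineMap.lineMap x y : ℝ →ᵃ[ℝ] E)
    have heq : φ = g ∘ (AffineMap.lineMap x y : ℝ →ᵃ[ℝ] E) := by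
      funext s; simp [φ, AffineMap.lineMap_apply]
      congr 1
      module
    rw [heq]
    simpa using this
  have hd : HasDerivAt φ ⟪gradient g (x + (0:ℝ) • (y - x)), y - x⟫ 0 :=
    hasDerivAt_line g hdg x (y - x) 0
  have hsl := hφc.le_slope_of_hasDerivAt (Set.mem_univ (0:ℝ)) (Set.mem_univ (1:ℝ)) one_pos hd
  have h0 : x + (0:ℝ) • (y - x) = x := by simp
  have h1 : x + (1:ℝ) • (y - x) = y := by simp
  rw [h0] at hsl
  rw [slope_def_field] at hsl
  simpa [φ, h0, h1, div_one] using hsl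

lemma descent (f : E → ℝ) (hf : Differentiable ℝ f) (β : ℝ) (hβ : 0 ≤ β)
    (hlip : LipschitzWith β.toNNReal (fun z => gradient f z)) (x y : E) :
    f y ≤ f x + ⟪gradient f x, y - x⟫ + β / 2 * ‖y - x‖ ^ 2 := by
  set d := y - x with hd
  set ψ : ℝ → ℝ := fun s => f (x + s • d) - s * ⟪gradient f x, d⟫ - s ^ 2 * (β * ‖d‖ ^ 2 / 2)
    with hψ
  have hψd : ∀ s : ℝ, HasDerivAt ψ
      (⟪gradient f (x + s • d), d⟫ - ⟪gradient f x, d⟫ - s * (β * ‖d‖ ^ 2)) s := by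
    intro s
    have h1 := hasDerivAt_line f hf x d s
    have h2 : HasDerivAt (fun s : ℝ => s * ⟪gradient f x, d⟫) ⟪gradient f x, d⟫ s := by
      simpa using (hasDerivAt_id s).mul_const (⟪gradient f x, d⟫ : ℝ)
    have h3 : HasDerivAt (fun s : ℝ => s ^ 2 * (β * ‖d‖ ^ 2 / 2)) (s * (β * ‖d‖ ^ 2)) s := by
      have := (hasDerivAt_pow 2 s).mul_const (β * ‖d‖ ^ 2 / 2)
      exact this.congr_deriv (by push_cast; ring)
    exact (h1.sub h2).sub h3
  have hanti : AntitoneOn ψ (Set.Icc (0:ℝ) 1) := by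
    apply antitoneOn_of_deriv_nonpos (convex_Icc 0 1)
    · exact fun s _ => (hψd s).continuousAt.continuousWithinAt
    · exact fun s _ => ((hψd s).differentiableAt).differentiableWithinAt
    · intro s hs
      rw [interior_Icc] at hs
      rw [(hψd s).deriv]
      have hCS : ⟪gradient f (x + s • d) - gradient f x, d⟫
          ≤ ‖gradient f (x + s • d) - gradient f x‖ * ‖d‖ := real_inner_le_norm _ _
      have hL : ‖gradient f (x + s • d) - gradient f x‖ ≤ β * (s * ‖d‖) := by
        have h := hlip.dist_le_mul (x + s • d) x
        rw [dist_eq_norm, dist_eq_norm] at h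
        have : ‖x + s • d - x‖ = s * ‖d‖ := by
          rw [add_sub_cancel_left, norm_smul, Real.norm_eq_abs, abs_of_pos hs.1]
        rw [this, Real.coe_toNNReal β hβ] at h
        exact h
      rw [inner_sub_left] at hCS
      nlinarith [norm_nonneg d, hs.1.le]
  have hkey := hanti (Set.left_mem_Icc.2 zero_le_one) (Set.right_mem_Icc.2 zero_le_one)
    zero_le_one
  have h0 : ψ 0 = f x := by simp [ψ]
  have h1 : ψ 1 = f y - ⟪gradient f x, d⟫ - β * ‖d‖ ^ 2 / 2 := by
    have : x + d = y := by simp [hd]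
    simp [ψ, this]
  rw [h0, h1] at hkey
  linarith

lemma prox_subgrad (h : E → ℝ) (hconv : ConvexOn ℝ Set.univ h) (t : ℝ) (ht : 0 < t)
    (v xp : E) (hmin : IsMinOn (fun z => t * h z + ‖z - v‖ ^ 2 / 2) Set.univ xp) (y : E) :
    ⟪v - xp, y - xp⟫ ≤ t * (h y - h xp) := by
  apply le_of_forall_pos_le_add
  intro ε hε
  set N := ‖y - xp‖ ^ 2 with hN
  have hN0 : 0 ≤ N := by positivity
  set s : ℝ := min 1 (2 * ε / (N + 1)) with hs
  have hspos : 0 < s := lt_min one_pos (by positivity)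
  have hs1 : s ≤ 1 := min_le_left _ _
  have hz := hmin (Set.mem_univ (xp + s • (y - xp)))
  simp only [Set.mem_setOf_eq] at hz
  have hcvx : h (xp + s • (y - xp)) ≤ (1 - s) * h xp + s * h y := by
    have := hconv.2 (Set.mem_univ xp) (Set.mem_univ y) (by linarith : (0:ℝ) ≤ 1 - s)
      hspos.le (by ring)
    have heq : (1 - s) • xp + s • y = xp + s • (y - xp) := by module
    rwa [heq] at this
  have hnorm : ‖xp + s • (y - xp) - v‖ ^ 2
      = ‖xp - v‖ ^ 2 + 2 * (s * ⟪xp - v, y - xp⟫) + s ^ 2 * N := by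
    have heq : xp + s • (y - xp) - v = (xp - v) + s • (y - xp) := by module
    rw [heq, norm_add_sq_real, real_inner_smul_right, norm_smul, Real.norm_eq_abs,
      abs_of_pos hspos, hN]
    ring
  have hkey : 0 ≤ s * (t * (h y - h xp) + ⟪xp - v, y - xp⟫ + s * N / 2) := by
    have := hz
    rw [hnorm] at this
    nlinarith [this, hcvx, ht]
  have hfac : 0 ≤ t * (h y - h xp) + ⟪xp - v, y - xp⟫ + s * N / 2 :=
    nonneg_of_mul_nonneg_right hkey hspos
  have hflip : ⟪v - xp, y - xp⟫ = -⟪xp - v, y - xp⟫ := by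
    rw [← inner_neg_left]; congr 1; module
  have hsN : s * N / 2 ≤ ε := by
    have hsle : s ≤ 2 * ε / (N + 1) := min_le_right _ _
    have : s * N ≤ (2 * ε / (N + 1)) * N :=
      mul_le_mul_of_nonneg_right hsle hN0
    have h2 : (2 * ε / (N + 1)) * N ≤ 2 * ε := by
      rw [div_mul_eq_mul_div, div_le_iff₀ (by positivity)]
      nlinarith
    linarith
  rw [hflip]
  linarith

lemma strong_conv (f : E → ℝ) (hf : Differentiable ℝ f) (α : ℝ)
    (hsc : ConvexOn ℝ Set.univ (fun z => f z - α / 2 * ‖z‖ ^ 2)) (x y : E) :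
    f x + ⟪gradient f x, y - x⟫ + α / 2 * ‖y - x‖ ^ 2 ≤ f y := by
  set g0 : E → ℝ := fun z => f z - α / 2 * ‖z‖ ^ 2 with hg0
  have hdg0 : Differentiable ℝ g0 :=
    hf.sub ((differentiable_id.norm_sq (𝕜 := ℝ)).const_mul _)
  have hgrad : HasGradientAt g0 (gradient f x - α • x) x := by
    rw [hasGradientAt_iff_hasFDerivAt]
    have h1 : HasFDerivAt (fun z : E => α / 2 * ‖z‖ ^ 2)
        ((α / 2) • (2 • (innerSL ℝ x))) x :=
      ((hasStrictFDerivAt_norm_sq x).hasFDerivAt).const_mul (α / 2)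
    have h2 := ((hf x).hasFDerivAt).sub h1
    refine h2.congr_fderiv ?_
    ext w
    simp [InnerProductSpace.toDual_apply_apply, inner_sub_left, real_inner_smul_left,
      fderiv_apply_eq_inner_gradient, two_smul, -inner_gradient_left]
    ring
  have hct := convex_tangent g0 hsc hdg0 x y
  rw [hgrad.gradient] at hct
  simp only [inner_sub_left, inner_sub_right, real_inner_smul_left,
    real_inner_self_eq_norm_sq] at hct ⊢
  have hns : ‖y - x‖ ^ 2 = ‖y‖ ^ 2 - 2 * ⟪x, y⟫ + ‖x‖ ^ 2 := by
    rw [norm_sub_sq_real, real_inner_comm y x]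
  simp only [hg0] at hct
  rw [hns]
  linarith [hct]

end Aux

/-- the key lemma (Lemma 3.1). `f` is `α`-strongly convex and `β`-smooth,
`h` is closed convex, `F = f + h`, `xplus = Prox_{th}(x − t∇f(x))` and
`G_t(x) = t⁻¹ • (x - xplus)`. For every `y` and `t ∈ (0, 1/β]`,
`F(y) ≥ F(x⁺) + ⟨G_t(x), y − x⟩ + (t/2)‖G_t(x)‖² + (α/2)‖y − x‖²`. -/
theorem stmt_2 (n : ℕ) (α β t : ℝ) (hα : 0 < α) (hαβ : α ≤ β)
    (f h : EuclideanSpace ℝ (Fin n) → ℝ)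
    (hsc : ConvexOn ℝ Set.univ (fun z => f z - α / 2 * ‖z‖ ^ 2))
    (hf : Differentiable ℝ f)
    (hlip : LipschitzWith β.toNNReal (fun z => gradient f z))
    (hconv : ConvexOn ℝ Set.univ h) (hlsc : LowerSemicontinuous h)
    (ht : t ∈ Set.Ioc (0 : ℝ) (1 / β))
    (x xplus : EuclideanSpace ℝ (Fin n))
    (hprox : IsMinOn (fun z => t * h z + ‖z - (x - t • gradient f x)‖ ^ 2 / 2)
      Set.univ xplus) :
    ∀ y : EuclideanSpace ℝ (Fin n),
      f y + h y ≥ (f xplus + h xplus) + ⟪t⁻¹ • (x - xplus), y - x⟫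
        + t / 2 * ‖t⁻¹ • (x - xplus)‖ ^ 2 + α / 2 * ‖y - x‖ ^ 2 := by
  intro y
  have htpos : 0 < t := ht.1
  have hβpos : 0 < β := hα.trans_le hαβ
  have hβt : β ≤ t⁻¹ := by
    have h1 := (le_div_iff₀ hβpos).mp ht.2
    rw [← one_div, le_div_iff₀ htpos]
    nlinarith
  set g := gradient f x with hg
  set A : ℝ := ⟪x - xplus, y - x⟫ with hA
  set B : ℝ := ‖x - xplus‖ ^ 2 with hB
  set P : ℝ := ⟪g, y - x⟫ with hP
  set Q : ℝ := ⟪g, x - xplus⟫ with hQ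
  set R : ℝ := ‖y - x‖ ^ 2 with hR
  have hBnn : 0 ≤ B := by positivity
  have h1 : f x + P + α / 2 * R ≤ f y := strong_conv f hf α hsc x y
  have h2 : f xplus ≤ f x - Q + β / 2 * B := by
    have := descent f hf β hβpos.le hlip x xplus
    have e1 : ‖xplus - x‖ ^ 2 = B := by rw [hB, norm_sub_rev]
    have e2 : ⟪g, xplus - x⟫ = -Q := by
      rw [hQ, ← inner_neg_right]; congr 1; module
    rw [e1, e2] at this
    linarith
  have h2' : f xplus ≤ f x - Q + t⁻¹ / 2 * B := by
    nlinarith [mul_nonneg (sub_nonneg.2 hβt) hBnn]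
  have h3 : A + B - t * (P + Q) ≤ t * (h y - h xplus) := by
    have := prox_subgrad h hconv t htpos (x - t • g) xplus hprox y
    have e : ⟪x - t • g - xplus, y - xplus⟫ = A + B - t * (P + Q) := by
      have e0 : x - t • g - xplus = (x - xplus) - t • g := by module
      have e1 : y - xplus = (y - x) + (x - xplus) := by module
      rw [e0, e1, inner_sub_left, inner_add_right, inner_add_right,
        real_inner_smul_left, real_inner_smul_left, real_inner_self_eq_norm_sq,
        ← hA, ← hB, ← hP, ← hQ]
      ring
    rw [e] at this
    exact this
  have h3' : t⁻¹ * A + t⁻¹ * B - (P + Q) ≤ h y - h xplus := by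
    have heq : t⁻¹ * A + t⁻¹ * B - (P + Q) = (A + B - t * (P + Q)) / t := by
      field_simp
    rw [heq, div_le_iff₀ htpos]
    linarith [h3]
  have hc1 : ⟪t⁻¹ • (x - xplus), y - x⟫ = t⁻¹ * A := real_inner_smul_left _ _ _
  have hc2 : t / 2 * ‖t⁻¹ • (x - xplus)‖ ^ 2 = t⁻¹ * B / 2 := by
    rw [norm_smul, Real.norm_eq_abs, abs_of_pos (inv_pos.2 htpos), mul_pow, ← hB]
    field_simp
  rw [ge_iff_le, hc1, hc2]
  linarith
end

section
/- Let t ∈ (0, 1/β] and let x, w, c ∈ ℝ^n. If ⟨x⁺ − x, w − x⟩ ≤ 0 and ⟨x⁺ − x, x − c⟩ ≥ 0, then F(x⁺) ≤ F(w) − (t/2)·‖G_t(x)‖² and ‖x^{++} − c‖² ≥ ‖G_t(x)‖²/α². -/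
open scoped RealInnerProductSpace

section Aux
variable {E : Type*} [NormedAddCommGroup E] [InnerProductSpace ℝ E] [CompleteSpace E]

lemma line_hasDerivAt (f : E → ℝ) (hf : Differentiable ℝ f) (x v : E) (s : ℝ) :
    HasDerivAt (fun s : ℝ => f (x + s • v)) ⟪gradient f (x + s • v), v⟫ s := by
  have hline : HasDerivAt (fun s : ℝ => x + s • v) v s := by
    simpa using ((hasDerivAt_id s).smul_const v).const_add x
  have hgrad := (hf (x + s • v)).hasGradientAt
  have := (hasGradientAt_iff_hasFDerivAt.mp hgrad).comp_hasDerivAt s hline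
  exact this

lemma convex_first_order {f : E → ℝ} (hc : ConvexOn ℝ Set.univ f)
    (hf : Differentiable ℝ f) (x v : E) :
    ⟪gradient f x, v⟫ ≤ f (x + v) - f x := by
  have hφc : ConvexOn ℝ Set.univ (fun s : ℝ => f (x + s • v)) := by
    have h1 : ConvexOn ℝ Set.univ (f ∘ (AffineMap.lineMap x (x + v) : ℝ →ᵃ[ℝ] E)) := by
      simpa using hc.comp_affineMap (AffineMap.lineMap x (x + v))
    have : (fun s : ℝ => f (x + s • v)) =
        f ∘ (AffineMap.lineMap x (x + v) : ℝ →ᵃ[ℝ] E) := by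
      funext s
      simp [AffineMap.lineMap_apply, add_comm]
    rw [this]; exact h1
  have hd : HasDerivAt (fun s : ℝ => f (x + s • v)) ⟪gradient f x, v⟫ 0 := by
    simpa using line_hasDerivAt f hf x v 0
  have := hφc.le_slope_of_hasDerivAt (Set.mem_univ (0:ℝ)) (Set.mem_univ 1) one_pos hd
  simpa [slope_def_field] using this

lemma descent_lemma {f : E → ℝ} {β : ℝ} (hβ : 0 < β)
    (hf : Differentiable ℝ f) (hlip : LipschitzWith β.toNNReal (fun z => gradient f z))
    (x v : E) :
    f (x + v) ≤ f x + ⟪gradient f x, v⟫ + β / 2 * ‖v‖ ^ 2 := by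
  set ψ : ℝ → ℝ := fun s => f (x + s • v) - s * ⟪gradient f x, v⟫ - s ^ 2 * (β / 2 * ‖v‖ ^ 2)
    with hψdef
  have hψd : ∀ s : ℝ, HasDerivAt ψ
      (⟪gradient f (x + s • v), v⟫ - ⟪gradient f x, v⟫ - 2 * s * (β / 2 * ‖v‖ ^ 2)) s := by
    intro s
    have h1 := line_hasDerivAt f hf x v s
    have h2 : HasDerivAt (fun s : ℝ => s * ⟪gradient f x, v⟫) ⟪gradient f x, v⟫ s := by
      simpa using (hasDerivAt_id s).mul_const ⟪gradient f x, v⟫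
    have h3 : HasDerivAt (fun s : ℝ => s ^ 2 * (β / 2 * ‖v‖ ^ 2))
        (2 * s * (β / 2 * ‖v‖ ^ 2)) s := by
      simpa using (hasDerivAt_pow 2 s).mul_const (β / 2 * ‖v‖ ^ 2)
    exact (h1.sub h2).sub h3
  have hanti : AntitoneOn ψ (Set.Icc 0 1) := by
    apply antitoneOn_of_deriv_nonpos (convex_Icc 0 1)
    · exact fun s _ => ((hψd s).continuousAt).continuousWithinAt
    · exact fun s _ => ((hψd s).differentiableAt).differentiableWithinAt
    · intro s hs
      rw [interior_Icc] at hs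
      rw [(hψd s).deriv]
      have hb : ⟪gradient f (x + s • v) - gradient f x, v⟫ ≤ β * s * ‖v‖ ^ 2 := by
        calc ⟪gradient f (x + s • v) - gradient f x, v⟫
            ≤ ‖gradient f (x + s • v) - gradient f x‖ * ‖v‖ := real_inner_le_norm _ _
          _ ≤ β * (s * ‖v‖) * ‖v‖ := by
              have := hlip.dist_le_mul (x + s • v) x
              rw [dist_eq_norm, dist_eq_norm] at this
              have h4 : ‖x + s • v - x‖ = s * ‖v‖ := by
                simp [norm_smul, abs_of_pos hs.1]
              rw [h4, Real.coe_toNNReal β hβ.le] at this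
              have h5 : 0 ≤ ‖v‖ := norm_nonneg v
              nlinarith [norm_nonneg (gradient f (x + s • v) - gradient f x)]
          _ = β * s * ‖v‖ ^ 2 := by ring
      rw [inner_sub_left] at hb
      nlinarith
  have := hanti (Set.mem_Icc.mpr ⟨le_refl 0, zero_le_one⟩) (Set.mem_Icc.mpr ⟨zero_le_one, le_refl 1⟩) zero_le_one
  simp only [hψdef] at this
  simp at this ⊢
  nlinarith [this]

lemma prox_subgradient {h : E → ℝ} (hconv : ConvexOn ℝ Set.univ h) {t : ℝ} (ht : 0 < t)
    {y xplus : E}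
    (hprox : IsMinOn (fun z => t * h z + ‖z - y‖ ^ 2 / 2) Set.univ xplus) (z : E) :
    t * h xplus + ⟪y - xplus, z - xplus⟫ ≤ t * h z := by
  have key : ∀ l : ℝ, 0 < l → l ≤ 1 →
      t * h xplus + ⟪y - xplus, z - xplus⟫ ≤ t * h z + l * (‖z - xplus‖ ^ 2 / 2) := by
    intro l hl0 hl1
    have hmin := hprox (Set.mem_univ (xplus + l • (z - xplus)))
    simp only [Set.mem_setOf_eq] at hmin
    have hcvx := hconv.2 (Set.mem_univ xplus) (Set.mem_univ z)
      (show (0:ℝ) ≤ 1 - l by linarith) hl0.le (by ring)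
    have hco : xplus + l • (z - xplus) = (1 - l) • xplus + l • z := by
      rw [smul_sub, sub_smul, one_smul]; abel
    have hnorm : ‖xplus + l • (z - xplus) - y‖ ^ 2 =
        ‖xplus - y‖ ^ 2 + 2 * l * ⟪xplus - y, z - xplus⟫ + l ^ 2 * ‖z - xplus‖ ^ 2 := by
      have : xplus + l • (z - xplus) - y = (xplus - y) + l • (z - xplus) := by abel
      rw [this, norm_add_sq_real, real_inner_smul_right, norm_smul, Real.norm_eq_abs,
        abs_of_pos hl0, mul_pow]
      ring
    rw [hco] at hmin
    have hmin2 : t * h xplus + ‖xplus - y‖ ^ 2 / 2 ≤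
        t * ((1 - l) * h xplus + l * h z) + ‖xplus + l • (z - xplus) - y‖ ^ 2 / 2 := by
      calc t * h xplus + ‖xplus - y‖ ^ 2 / 2
          ≤ t * h ((1 - l) • xplus + l • z) + ‖(1 - l) • xplus + l • z - y‖ ^ 2 / 2 := hmin
        _ ≤ t * ((1 - l) * h xplus + l * h z) + ‖(1 - l) • xplus + l • z - y‖ ^ 2 / 2 := by
            have := mul_le_mul_of_nonneg_left hcvx ht.le
            simp only [smul_eq_mul] at this ⊢
            linarith
        _ = t * ((1 - l) * h xplus + l * h z) + ‖xplus + l • (z - xplus) - y‖ ^ 2 / 2 := by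
            rw [hco]
    rw [hnorm] at hmin2
    have hinner : ⟪xplus - y, z - xplus⟫ = -⟪y - xplus, z - xplus⟫ := by
      rw [← inner_neg_left]; congr 1; abel
    rw [hinner] at hmin2
    have := mul_le_mul_of_nonneg_left (le_refl (0:ℝ)) hl0.le
    nlinarith [hmin2, hl0]
  by_contra hcon
  push_neg at hcon
  set A := t * h xplus + ⟪y - xplus, z - xplus⟫ with hA
  set B := t * h z with hB
  have hc0 : (0:ℝ) ≤ ‖z - xplus‖ ^ 2 / 2 := by positivity
  set c := ‖z - xplus‖ ^ 2 / 2 with hc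
  have hD : 0 < A - B := by linarith
  obtain ⟨l, hl0, hl1, hlc⟩ : ∃ l : ℝ, 0 < l ∧ l ≤ 1 ∧ l * c ≤ (A - B) / 2 := by
    refine ⟨min 1 ((A - B) / (2 * c + 1)), lt_min one_pos (by positivity), min_le_left _ _, ?_⟩
    have h3 : min 1 ((A - B) / (2 * c + 1)) * c ≤ (A - B) / (2 * c + 1) * c :=
      mul_le_mul_of_nonneg_right (min_le_right _ _) hc0
    have h4 : (A - B) / (2 * c + 1) * c ≤ (A - B) / 2 := by
      rw [div_mul_eq_mul_div, div_le_div_iff₀ (by linarith) two_pos]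
      nlinarith
    linarith
  have := key l hl0 hl1
  linarith

end Aux

/-- Lemma 3.2: if `⟨x⁺ − x, w − x⟩ ≤ 0` and `⟨x⁺ − x, x − c⟩ ≥ 0`, then
`F(x⁺) ≤ F(w) − (t/2)‖G_t(x)‖²` and `‖x^{++} − c‖² ≥ ‖G_t(x)‖²/α²`, where
`xplus = Prox_{th}(x − t∇f(x))`, `G_t(x) = t⁻¹ • (x - xplus)`,
`x^{++} = x − G_t(x)/α` and `F = f + h`. -/
theorem stmt_5 (n : ℕ) (α β t : ℝ) (hα : 0 < α) (hαβ : α ≤ β)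
    (f h : EuclideanSpace ℝ (Fin n) → ℝ)
    (hsc : ConvexOn ℝ Set.univ (fun z => f z - α / 2 * ‖z‖ ^ 2))
    (hf : Differentiable ℝ f)
    (hlip : LipschitzWith β.toNNReal (fun z => gradient f z))
    (hconv : ConvexOn ℝ Set.univ h) (hlsc : LowerSemicontinuous h)
    (ht : t ∈ Set.Ioc (0 : ℝ) (1 / β))
    (x w c xplus : EuclideanSpace ℝ (Fin n))
    (hprox : IsMinOn (fun z => t * h z + ‖z - (x - t • gradient f x)‖ ^ 2 / 2)
      Set.univ xplus)
    (h1 : ⟪xplus - x, w - x⟫ ≤ 0)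
    (h2 : ⟪xplus - x, x - c⟫ ≥ 0) :
    f xplus + h xplus ≤ (f w + h w) - t / 2 * ‖t⁻¹ • (x - xplus)‖ ^ 2
      ∧ ‖(x - α⁻¹ • (t⁻¹ • (x - xplus))) - c‖ ^ 2 ≥ ‖t⁻¹ • (x - xplus)‖ ^ 2 / α ^ 2 := by
  obtain ⟨ht0, ht1⟩ := ht
  have hβ : 0 < β := lt_of_lt_of_le hα hαβ
  have htβ : t * β ≤ 1 := by
    rw [← le_div_iff₀ hβ] at *; linarith [ht1]
  set g := gradient f x with hg
  have hNsmul : ‖t⁻¹ • (x - xplus)‖ ^ 2 = t⁻¹ ^ 2 * ‖x - xplus‖ ^ 2 := by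
    rw [norm_smul, Real.norm_eq_abs, abs_of_pos (inv_pos.mpr ht0), mul_pow]
  constructor
  · -- Part 1
    have hfconv : ConvexOn ℝ Set.univ f :=
      strongConvexOn_zero.mp ((strongConvexOn_iff_convex.mpr hsc).mono hα.le)
    have hB : ⟪g, w - x⟫ ≤ f w - f x := by
      have := convex_first_order hfconv hf x (w - x)
      rw [hg]; simp at this ⊢; linarith
    have hA : f xplus ≤ f x + ⟪g, xplus - x⟫ + β / 2 * ‖x - xplus‖ ^ 2 := by
      have := descent_lemma hβ hf hlip x (xplus - x)
      rw [norm_sub_rev xplus x] at this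
      rw [hg]; simp at this ⊢; linarith
    have hC := prox_subgradient hconv ht0 hprox w
    have EP : ⟪x - t • g - xplus, w - xplus⟫ =
        ⟪x - xplus, w - x⟫ + ‖x - xplus‖ ^ 2 - t * ⟪g, w - x⟫ + t * ⟪g, xplus - x⟫ := by
      have e0 : x - t • g - xplus = (x - xplus) - t • g := by abel
      have e1 : w - xplus = (w - x) + (x - xplus) := by abel
      have e2 : ⟪g, x - xplus⟫ = -⟪g, xplus - x⟫ := by
        rw [← inner_neg_right]; congr 1; abel
      rw [e0, e1, inner_sub_left, inner_add_right, inner_add_right, real_inner_smul_left,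
        real_inner_smul_left, real_inner_self_eq_norm_sq, e2]
      ring
    rw [EP] at hC
    have h1' : 0 ≤ ⟪x - xplus, w - x⟫ := by
      have e4 : ⟪x - xplus, w - x⟫ = -⟪xplus - x, w - x⟫ := by
        rw [← inner_neg_left]; congr 1; abel
      rw [e4]; linarith
    have hN0 : (0:ℝ) ≤ ‖x - xplus‖ ^ 2 := by positivity
    have h6 : t * (β / 2 * ‖x - xplus‖ ^ 2) ≤ 1 / 2 * ‖x - xplus‖ ^ 2 := by nlinarith
    have hAt := mul_le_mul_of_nonneg_left hA ht0.le
    have hBt := mul_le_mul_of_nonneg_left hB ht0.le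
    have K : t * (f xplus + h xplus) ≤ t * (f w + h w) - 1 / 2 * ‖x - xplus‖ ^ 2 := by
      nlinarith [hAt, hBt, hC, h1', h6]
    have hgoal : (f w + h w) - t / 2 * ‖t⁻¹ • (x - xplus)‖ ^ 2 =
        (f w + h w) - t⁻¹ / 2 * ‖x - xplus‖ ^ 2 := by
      rw [hNsmul]; field_simp
    rw [hgoal]
    rw [← mul_le_mul_iff_right₀ ht0]
    have hid : t * ((f w + h w) - t⁻¹ / 2 * ‖x - xplus‖ ^ 2) =
        t * (f w + h w) - 1 / 2 * ‖x - xplus‖ ^ 2 := by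
      field_simp
    rw [hid]; exact K
  · -- Part 2
    have hin : ⟪x - c, x - xplus⟫ ≤ 0 := by
      have e : ⟪xplus - x, x - c⟫ = -⟪x - c, x - xplus⟫ := by
        rw [real_inner_comm, ← inner_neg_right]; congr 1; abel
      rw [e] at h2; linarith
    have e0 : (x - α⁻¹ • (t⁻¹ • (x - xplus))) - c = (x - c) - α⁻¹ • (t⁻¹ • (x - xplus)) := by
      abel
    have h7 : ‖α⁻¹ • t⁻¹ • (x - xplus)‖ ^ 2 = α⁻¹ ^ 2 * (t⁻¹ ^ 2 * ‖x - xplus‖ ^ 2) := by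
      rw [norm_smul, mul_pow, hNsmul, Real.norm_eq_abs, sq_abs]
    have h8 : ‖t⁻¹ • (x - xplus)‖ ^ 2 / α ^ 2 = α⁻¹ ^ 2 * (t⁻¹ ^ 2 * ‖x - xplus‖ ^ 2) := by
      rw [hNsmul]; field_simp
    rw [ge_iff_le, e0, norm_sub_sq_real, inner_smul_right, inner_smul_right, h8, h7]
    have h5 : t⁻¹ * ⟪x - c, x - xplus⟫ ≤ 0 := by
      have := mul_le_mul_of_nonneg_left hin (inv_nonneg.mpr ht0.le)
      simpa using this
    have hinn : α⁻¹ * (t⁻¹ * ⟪x - c, x - xplus⟫) ≤ 0 := by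
      have := mul_le_mul_of_nonneg_left h5 (inv_nonneg.mpr hα.le)
      simpa using this
    have hnc : (0:ℝ) ≤ ‖x - c‖ ^ 2 := by positivity
    linarith [hinn, hnc]
end

section
/- Fix t > 0 and x, c ∈ ℝ^n. The function φ_{t,x,c} is Lipschitz continuous: for all z₁, z₂ ∈ ℝ^n, |φ_{t,x,c}(z₁) − φ_{t,x,c}(z₂)| ≤ (2 + tβ)·‖x − c‖·‖z₁ − z₂‖. -/
open scoped RealInnerProductSpace

section Aux

variable {E : Type*} [NormedAddCommGroup E] [InnerProductSpace ℝ E]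

lemma combo_sq (a b : E) (l : ℝ) :
    ‖(1 - l) • a + l • b‖ ^ 2
      = (1 - l) * ‖a‖ ^ 2 + l * ‖b‖ ^ 2 - l * (1 - l) * ‖a - b‖ ^ 2 := by
  simp only [← real_inner_self_eq_norm_sq, inner_add_add_self, inner_sub_sub_self,
    real_inner_smul_left, real_inner_smul_right]
  ring

lemma strong_min (t : ℝ) (h : E → ℝ) (hconv : ConvexOn ℝ Set.univ h)
    (ht : 0 ≤ t) (v p : E)
    (hmin : IsMinOn (fun u => t * h u + ‖u - v‖ ^ 2 / 2) Set.univ p) (u : E) :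
    t * h p + ‖p - v‖ ^ 2 / 2 + ‖u - p‖ ^ 2 / 2 ≤ t * h u + ‖u - v‖ ^ 2 / 2 := by
  apply le_of_forall_pos_le_add
  intro ε hε
  set r := ‖u - p‖ ^ 2 with hr
  have hr0 : 0 ≤ r := sq_nonneg _
  set l : ℝ := min (1/2) (ε / (r + 1)) with hl
  have hl0 : 0 < l := lt_min (by norm_num) (div_pos hε (by linarith))
  have hl1 : l ≤ 1/2 := min_le_left _ _
  have hlr : l * (r + 1) ≤ ε := by
    have : l ≤ ε / (r + 1) := min_le_right _ _
    calc l * (r + 1) ≤ (ε / (r + 1)) * (r + 1) := by nlinarith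
    _ = ε := by field_simp
  have hmem : (1 - l) • p + l • u ∈ Set.univ := Set.mem_univ _
  have h1 := hmin hmem
  simp only [Set.mem_setOf_eq] at h1
  have hh : h ((1 - l) • p + l • u) ≤ (1 - l) * h p + l * h u := by
    have := hconv.2 (Set.mem_univ p) (Set.mem_univ u) (by linarith : (0:ℝ) ≤ 1 - l)
      (le_of_lt hl0) (by ring)
    simpa [smul_eq_mul] using this
  have hcombo : ‖(1 - l) • p + l • u - v‖ ^ 2
      = (1 - l) * ‖p - v‖ ^ 2 + l * ‖u - v‖ ^ 2 - l * (1 - l) * ‖u - p‖ ^ 2 := by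
    have h2 : (1 - l) • p + l • u - v = (1 - l) • (p - v) + l • (u - v) := by
      module
    rw [h2, combo_sq]
    have : p - v - (u - v) = p - u := by abel
    rw [this, ← neg_sub u p, norm_neg]
  rw [hcombo, ← hr] at h1
  -- h1 : t * h p + ‖p - v‖^2/2 ≤ t * h ((1-l)•p+l•u) + (…)/2
  have key : t * h p + ‖p - v‖ ^ 2 / 2
      ≤ t * ((1 - l) * h p + l * h u)
        + ((1 - l) * ‖p - v‖ ^ 2 + l * ‖u - v‖ ^ 2 - l * (1 - l) * r) / 2 := by
    have := mul_le_mul_of_nonneg_left hh ht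
    linarith
  -- rearrange and divide by l
  have hdiv : t * h p + ‖p - v‖ ^ 2 / 2 + (1 - l) * r / 2
      ≤ t * h u + ‖u - v‖ ^ 2 / 2 := by
    nlinarith [key, hl0]
  nlinarith [hdiv, hl0, hr0, hlr]

lemma prox_nonexpansive (t : ℝ) (h : E → ℝ) (hconv : ConvexOn ℝ Set.univ h)
    (ht : 0 ≤ t) (P : E → E)
    (hP : ∀ v, IsMinOn (fun u => t * h u + ‖u - v‖ ^ 2 / 2) Set.univ (P v))
    (v₁ v₂ : E) : ‖P v₁ - P v₂‖ ≤ ‖v₁ - v₂‖ := by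
  set p₁ := P v₁
  set p₂ := P v₂
  have h1 := strong_min t h hconv ht v₁ p₁ (hP v₁) p₂
  have h2 := strong_min t h hconv ht v₂ p₂ (hP v₂) p₁
  have hsum : ‖p₁ - p₂‖ ^ 2 ≤ ⟪p₁ - p₂, v₁ - v₂⟫ := by
    have e1 : ‖p₂ - p₁‖ = ‖p₁ - p₂‖ := by rw [← neg_sub p₁ p₂, norm_neg]
    have e2 : ∀ a b : E, ‖a - b‖ ^ 2 = ‖a‖ ^ 2 - 2 * ⟪a, b⟫ + ‖b‖ ^ 2 := by
      intro a b
      rw [← real_inner_self_eq_norm_sq, inner_sub_sub_self, real_inner_self_eq_norm_sq,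
        real_inner_self_eq_norm_sq, real_inner_comm b a]; ring
    have e3 : ⟪p₁ - p₂, v₁ - v₂⟫ = ⟪p₁, v₁⟫ - ⟪p₁, v₂⟫ - ⟪p₂, v₁⟫ + ⟪p₂, v₂⟫ := by
      rw [inner_sub_left, inner_sub_right, inner_sub_right]; ring
    rw [e3]
    rw [e1] at h1
    simp only [e2] at h1 h2 ⊢
    linarith
  have hcs : ⟪p₁ - p₂, v₁ - v₂⟫ ≤ ‖p₁ - p₂‖ * ‖v₁ - v₂‖ := real_inner_le_norm _ _
  rcases eq_or_lt_of_le (norm_nonneg (p₁ - p₂)) with h0 | h0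
  · rw [← h0]; exact norm_nonneg _
  · nlinarith

end Aux

/-- Lemma 3.3(i): Lipschitz continuity of
`φ_{t,x,c}(z) = ⟨z⁺ − z, x − c⟩`, where `z⁺ = P (z − t∇f(z))` and `P v = Prox_{th}(v)`
is the minimizer of `u ↦ t·h(u) + ½‖u − v‖²`. -/
theorem stmt_6 (n : ℕ) (β t : ℝ) (hβ : 0 < β) (ht : 0 < t)
    (f h : EuclideanSpace ℝ (Fin n) → ℝ)
    (hf : Differentiable ℝ f)
    (hlip : LipschitzWith β.toNNReal (fun z => gradient f z))
    (hconv : ConvexOn ℝ Set.univ h) (hlsc : LowerSemicontinuous h)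
    (P : EuclideanSpace ℝ (Fin n) → EuclideanSpace ℝ (Fin n))
    (hP : ∀ v, IsMinOn (fun u => t * h u + ‖u - v‖ ^ 2 / 2) Set.univ (P v))
    (x c : EuclideanSpace ℝ (Fin n)) :
    ∀ z₁ z₂ : EuclideanSpace ℝ (Fin n),
      |⟪P (z₁ - t • gradient f z₁) - z₁, x - c⟫ - ⟪P (z₂ - t • gradient f z₂) - z₂, x - c⟫|
        ≤ (2 + t * β) * ‖x - c‖ * ‖z₁ - z₂‖ := by
  intro z₁ z₂
  set v₁ := z₁ - t • gradient f z₁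
  set v₂ := z₂ - t • gradient f z₂
  have hgrad : ‖gradient f z₁ - gradient f z₂‖ ≤ β * ‖z₁ - z₂‖ := by
    have := hlip.dist_le_mul z₁ z₂
    rw [dist_eq_norm, dist_eq_norm] at this
    simpa [Real.coe_toNNReal β hβ.le] using this
  have hv : ‖v₁ - v₂‖ ≤ (1 + t * β) * ‖z₁ - z₂‖ := by
    have he : v₁ - v₂ = (z₁ - z₂) - t • (gradient f z₁ - gradient f z₂) := by
      simp only [v₁, v₂, smul_sub]; abel
    rw [he]
    calc ‖(z₁ - z₂) - t • (gradient f z₁ - gradient f z₂)‖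
        ≤ ‖z₁ - z₂‖ + ‖t • (gradient f z₁ - gradient f z₂)‖ := norm_sub_le _ _
      _ ≤ ‖z₁ - z₂‖ + t * (β * ‖z₁ - z₂‖) := by
          rw [norm_smul, Real.norm_eq_abs, abs_of_pos ht]
          exact add_le_add_right (mul_le_mul_of_nonneg_left hgrad ht.le) _
      _ = (1 + t * β) * ‖z₁ - z₂‖ := by ring
  have hne : ‖P v₁ - P v₂‖ ≤ ‖v₁ - v₂‖ :=
    prox_nonexpansive t h hconv ht.le P hP v₁ v₂
  have hdiff : ⟪P v₁ - z₁, x - c⟫ - ⟪P v₂ - z₂, x - c⟫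
      = ⟪(P v₁ - P v₂) - (z₁ - z₂), x - c⟫ := by
    simp only [inner_sub_left]; ring
  rw [hdiff]
  calc |⟪(P v₁ - P v₂) - (z₁ - z₂), x - c⟫|
      ≤ ‖(P v₁ - P v₂) - (z₁ - z₂)‖ * ‖x - c‖ := abs_real_inner_le_norm _ _
    _ ≤ (‖P v₁ - P v₂‖ + ‖z₁ - z₂‖) * ‖x - c‖ :=
        mul_le_mul_of_nonneg_right (norm_sub_le _ _) (norm_nonneg _)
    _ ≤ ((1 + t * β) * ‖z₁ - z₂‖ + ‖z₁ - z₂‖) * ‖x - c‖ := by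
        apply mul_le_mul_of_nonneg_right _ (norm_nonneg _)
        exact add_le_add_left (hne.trans hv) _
    _ = (2 + t * β) * ‖x - c‖ * ‖z₁ - z₂‖ := by ring
end

section
/- Fix t ∈ (0, 1/β] and x, c ∈ ℝ^n with x ≠ c. Then φ̄_{t,x,c} is strictly monotonically increasing; quantitatively, for all s₁ < s₂ one has φ̄_{t,x,c}(s₂) − φ̄_{t,x,c}(s₁) ≥ (αt/2)·(s₂ − s₁)·‖x − c‖² > 0. -/
open scoped RealInnerProductSpace
open Set InnerProductSpace

variable {E : Type*} [NormedAddCommGroup E] [InnerProductSpace ℝ E] [CompleteSpace E]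

lemma aux_line_deriv (φ : E → ℝ) (x d : E) (s : ℝ) (g : E)
    (hg : HasGradientAt φ g (x + s • d)) :
    HasDerivAt (fun s : ℝ => φ (x + s • d)) ⟪g, d⟫ s := by
  have h1 : HasFDerivAt φ (toDual ℝ E g) (x + s • d) :=
    hasGradientAt_iff_hasFDerivAt.mp hg
  have h2 : HasDerivAt (fun s : ℝ => x + s • d) d s := by
    simpa using ((hasDerivAt_id s).smul_const d).const_add x
  simpa [toDual_apply_apply, Function.comp_def] using h1.comp_hasDerivAt s h2

lemma aux_hasGradientAt_sub {φ ψ : E → ℝ} {a b : E} {x : E}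
    (h1 : HasGradientAt φ a x) (h2 : HasGradientAt ψ b x) :
    HasGradientAt (fun u => φ u - ψ u) (a - b) x := by
  rw [hasGradientAt_iff_hasFDerivAt] at *
  simpa [map_sub, Pi.sub_def] using h1.sub h2

lemma aux_hasGradientAt_quad (α : ℝ) (x : E) :
    HasGradientAt (fun u : E => α / 2 * ‖u‖ ^ 2) (α • x) x := by
  rw [hasGradientAt_iff_hasFDerivAt]
  have h : HasFDerivAt (fun u : E => (⟪u, u⟫ : ℝ))
      ((fderivInnerCLM ℝ (x, x)).comp
        ((ContinuousLinearMap.id ℝ E).prod (ContinuousLinearMap.id ℝ E))) x :=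
    (hasFDerivAt_id x).inner ℝ (hasFDerivAt_id x)
  have h2 := h.const_mul (α / 2)
  have hfeq : (fun u : E => α / 2 * ‖u‖ ^ 2) = fun u : E => α / 2 * (⟪u, u⟫ : ℝ) := by
    funext u; rw [real_inner_self_eq_norm_sq]
  rw [hfeq]
  refine h2.congr_fderiv ?_
  ext v
  simp [toDual_apply_apply, fderivInnerCLM_apply, real_inner_comm]
  ring

lemma aux_hasGradientAt_linear (a : E) (x : E) :
    HasGradientAt (fun u : E => (⟪a, u⟫ : ℝ)) a x := by
  rw [hasGradientAt_iff_hasFDerivAt]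
  exact (toDual ℝ E a).hasFDerivAt

lemma aux_first_order (φ : E → ℝ) (hφ : ConvexOn ℝ Set.univ φ) (x y : E) (gx : E)
    (hgx : HasGradientAt φ gx x) :
    φ x + ⟪gx, y - x⟫ ≤ φ y := by
  set d := y - x with hdd
  have hψ : ConvexOn ℝ Set.univ (fun s : ℝ => φ (x + s • d)) := by
    have h := hφ.comp_affineMap (AffineMap.lineMap x y : ℝ →ᵃ[ℝ] E)
    have he : (fun s : ℝ => φ (x + s • d)) =
        (φ ∘ (AffineMap.lineMap x y : ℝ →ᵃ[ℝ] E)) := by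
      funext s
      simp only [Function.comp_apply, AffineMap.lineMap_apply_module, hdd]
      congr 1
      module
    rw [he]
    simpa using h
  have h0 : x + (0 : ℝ) • d = x := by simp
  have hder : HasDerivAt (fun s : ℝ => φ (x + s • d)) ⟪gx, d⟫ 0 := by
    apply aux_line_deriv
    rwa [h0]
  have hsl := hψ.le_slope_of_hasDerivAt (mem_univ (0 : ℝ)) (mem_univ (1 : ℝ)) one_pos hder
  rw [slope_def_field] at hsl
  have h1 : x + (1 : ℝ) • d = y := by rw [hdd]; module
  rw [h0, h1] at hsl
  simp at hsl
  linarith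

lemma aux_descent (φ : E → ℝ) (hd : Differentiable ℝ φ) {β : ℝ} (hβ : 0 < β)
    (hlip : LipschitzWith β.toNNReal (fun z => gradient φ z)) (x y : E) :
    φ y ≤ φ x + ⟪gradient φ x, y - x⟫ + β / 2 * ‖y - x‖ ^ 2 := by
  set d := y - x with hdd
  set A : ℝ := ⟪gradient φ x, d⟫ with hA
  set B : ℝ := β / 2 * ‖d‖ ^ 2 with hB
  set g : ℝ → ℝ := fun s => φ (x + s • d) - s * A - s ^ 2 * B with hgdef
  have hg' : ∀ s : ℝ, HasDerivAt g
      (⟪gradient φ (x + s • d), d⟫ - A - 2 * s * B) s := by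
    intro s
    have h1 := aux_line_deriv φ x d s _ (hd (x + s • d)).hasGradientAt
    have h2 : HasDerivAt (fun s : ℝ => s * A) A s := by
      simpa using (hasDerivAt_id s).mul_const A
    have h3 : HasDerivAt (fun s : ℝ => s ^ 2 * B) (2 * s * B) s := by
      have := (hasDerivAt_pow 2 s).mul_const B
      simpa [mul_comm] using this
    simpa [Pi.sub_def] using (h1.sub h2).sub h3
  have anti : AntitoneOn g (Icc (0 : ℝ) 1) := by
    apply antitoneOn_of_deriv_nonpos (convex_Icc 0 1)
    · exact fun s _ => ((hg' s).differentiableAt.continuousAt).continuousWithinAt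
    · intro s _
      exact (hg' s).differentiableAt.differentiableWithinAt
    · intro s hs
      rw [interior_Icc] at hs
      rw [(hg' s).deriv]
      have hlb : ‖gradient φ (x + s • d) - gradient φ x‖ ≤ β * (s * ‖d‖) := by
        have h := hlip.dist_le_mul (x + s • d) x
        rw [dist_eq_norm, dist_eq_norm] at h
        have he : x + s • d - x = s • d := by module
        rw [he] at h
        rw [norm_smul] at h
        rw [Real.coe_toNNReal β hβ.le] at h
        calc ‖gradient φ (x + s • d) - gradient φ x‖ ≤ β * (‖(s : ℝ)‖ * ‖d‖) := h
          _ = β * (s * ‖d‖) := by rw [Real.norm_eq_abs, abs_of_pos hs.1]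
      have hin : (⟪gradient φ (x + s • d) - gradient φ x, d⟫ : ℝ) ≤ β * (s * ‖d‖) * ‖d‖ := by
        refine le_trans (real_inner_le_norm _ _) ?_
        have := norm_nonneg d
        nlinarith
      rw [inner_sub_left] at hin
      have hs0 := hs.1
      nlinarith [norm_nonneg d, sq_nonneg ‖d‖]
  have h01 := anti (left_mem_Icc.mpr zero_le_one) (right_mem_Icc.mpr zero_le_one) zero_le_one
  have e1 : x + (1 : ℝ) • d = y := by rw [hdd]; module
  have e0 : x + (0 : ℝ) • d = x := by simp
  simp only [hgdef, e1, e0, one_mul, one_pow, zero_mul, pow_two, mul_zero, zero_pow,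
    sub_zero] at h01
  have : φ y - A - B ≤ φ x := by
    have h00 : (0:ℝ) * A = 0 := by ring
    have h01' := h01
    nlinarith [h01]
  linarith

/-- strong convexity first-order bound -/
lemma aux_sc (α : ℝ) (f : E → ℝ)
    (hsc : ConvexOn ℝ Set.univ (fun z => f z - α / 2 * ‖z‖ ^ 2))
    (hf : Differentiable ℝ f) (x y : E) :
    f x + ⟪gradient f x, y - x⟫ + α / 2 * ‖y - x‖ ^ 2 ≤ f y := by
  have hg : HasGradientAt (fun z => f z - α / 2 * ‖z‖ ^ 2) (gradient f x - α • x) x :=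
    aux_hasGradientAt_sub (hf x).hasGradientAt (aux_hasGradientAt_quad α x)
  have h := aux_first_order _ hsc x y _ hg
  simp only [inner_sub_left] at h
  have hsm : (⟪α • x, y - x⟫ : ℝ) = α * ⟪x, y - x⟫ := real_inner_smul_left _ _ _
  have hexp : ‖y - x‖ ^ 2 = ‖y‖ ^ 2 - 2 * ⟪y, x⟫ + ‖x‖ ^ 2 := by
    rw [← real_inner_self_eq_norm_sq, ← real_inner_self_eq_norm_sq, ← real_inner_self_eq_norm_sq]
    simp [inner_sub_left, inner_sub_right, real_inner_comm]
    linarith [norm_sub_sq_real y x, real_inner_comm x y]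
  have hix : (⟪x, y - x⟫ : ℝ) = ⟪x, y⟫ - ⟪x, x⟫ := by rw [inner_sub_right]
  rw [hsm, hix, real_inner_self_eq_norm_sq] at h
  have hc : (⟪y, x⟫ : ℝ) = ⟪x, y⟫ := real_inner_comm _ _
  rw [hexp, hc]
  linarith

/-- co-coercivity -/
lemma aux_coco (α β : ℝ) (hα : 0 < α) (hαβ : α ≤ β) (f : E → ℝ)
    (hsc : ConvexOn ℝ Set.univ (fun z => f z - α / 2 * ‖z‖ ^ 2))
    (hf : Differentiable ℝ f)
    (hlip : LipschitzWith β.toNNReal (fun z => gradient f z)) (z y : E) :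
    (1 / β) * ‖gradient f y - gradient f z‖ ^ 2 ≤ ⟪gradient f y - gradient f z, y - z⟫ := by
  have hβ : 0 < β := lt_of_lt_of_le hα hαβ
  -- one-sided estimate
  have key : ∀ z y : E, f z - ⟪gradient f z, z⟫ + (1 / (2 * β)) * ‖gradient f y - gradient f z‖ ^ 2
      ≤ f y - ⟪gradient f z, y⟫ := by
    intro z y
    set F : E → ℝ := fun u => f u - ⟪gradient f z, u⟫ with hF
    have hFd : Differentiable ℝ F := by
      apply hf.sub
      exact fun u => ((toDual ℝ E (gradient f z)).differentiable u : _)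
    have hFg : ∀ u, HasGradientAt F (gradient f u - gradient f z) u := fun u =>
      aux_hasGradientAt_sub (hf u).hasGradientAt (aux_hasGradientAt_linear _ u)
    have hFgrad : ∀ u, gradient F u = gradient f u - gradient f z := fun u =>
      (hFg u).gradient
    have hFlip : LipschitzWith β.toNNReal (fun u => gradient F u) := by
      apply LipschitzWith.of_dist_le_mul
      intro a b
      simp only [hFgrad]
      rw [dist_eq_norm]
      have he : gradient f a - gradient f z - (gradient f b - gradient f z)
          = gradient f a - gradient f b := by module
      rw [he, ← dist_eq_norm]
      exact hlip.dist_le_mul a b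
    -- z is a global min of F
    have hmin : ∀ u, F z ≤ F u := by
      intro u
      have := aux_sc α f hsc hf z u
      have h2 : 0 ≤ α / 2 * ‖u - z‖ ^ 2 := by positivity
      simp only [hF]
      have hiz : (⟪gradient f z, u⟫ : ℝ) = ⟪gradient f z, z⟫ + ⟪gradient f z, u - z⟫ := by
        rw [inner_sub_right]; ring
      rw [hiz]
      linarith
    -- descent step
    set D := gradient f y - gradient f z with hD
    have hdes := aux_descent F hFd hβ hFlip y (y - (1 / β) • D)
    rw [hFgrad y, ← hD] at hdes
    have he1 : y - (1 / β) • D - y = -((1 / β) • D) := by module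
    rw [he1] at hdes
    have he2 : (⟪D, -((1 / β) • D)⟫ : ℝ) = -(1 / β) * ‖D‖ ^ 2 := by
      rw [inner_neg_right, real_inner_smul_right, real_inner_self_eq_norm_sq]
      ring
    have he3 : ‖-((1 / β) • D)‖ ^ 2 = (1 / β) ^ 2 * ‖D‖ ^ 2 := by
      rw [norm_neg, norm_smul, mul_pow, Real.norm_eq_abs, sq_abs]
    rw [he2, he3] at hdes
    have hm := hmin (y - (1 / β) • D)
    have hfield : β / 2 * ((1 / β) ^ 2 * ‖D‖ ^ 2) = 1 / (2 * β) * ‖D‖ ^ 2 := by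
      field_simp
    rw [hfield] at hdes
    have : F z ≤ F y - (1 / β) * ‖D‖ ^ 2 + 1 / (2 * β) * ‖D‖ ^ 2 := by
      calc F z ≤ F (y - (1 / β) • D) := hm
        _ ≤ F y + (-(1 / β) * ‖D‖ ^ 2) + 1 / (2 * β) * ‖D‖ ^ 2 := hdes
        _ = F y - (1 / β) * ‖D‖ ^ 2 + 1 / (2 * β) * ‖D‖ ^ 2 := by ring
    have hq : (1 / β) * ‖D‖ ^ 2 - 1 / (2 * β) * ‖D‖ ^ 2 = 1 / (2 * β) * ‖D‖ ^ 2 := by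
      field_simp
      ring
    simp only [hF] at this
    linarith [this, hq.le, hq.ge]
  have h1 := key z y
  have h2 := key y z
  have hsym : ‖gradient f z - gradient f y‖ = ‖gradient f y - gradient f z‖ := norm_sub_rev _ _
  rw [hsym] at h2
  have hi : (⟪gradient f y - gradient f z, y - z⟫ : ℝ)
      = (⟪gradient f y, y⟫ - ⟪gradient f y, z⟫) - (⟪gradient f z, y⟫ - ⟪gradient f z, z⟫) := by
    rw [inner_sub_left, inner_sub_right, inner_sub_right]
  rw [hi]
  have hb : 1 / (2 * β) + 1 / (2 * β) = 1 / β := by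
    rw [← add_div]
    rw [div_eq_div_iff (by positivity) (by positivity)]
    ring
  nlinarith [h1, h2]

/-- strong monotonicity -/
lemma aux_mono (α : ℝ) (f : E → ℝ)
    (hsc : ConvexOn ℝ Set.univ (fun z => f z - α / 2 * ‖z‖ ^ 2))
    (hf : Differentiable ℝ f) (z y : E) :
    α * ‖y - z‖ ^ 2 ≤ ⟪gradient f y - gradient f z, y - z⟫ := by
  have h1 := aux_sc α f hsc hf z y
  have h2 := aux_sc α f hsc hf y z
  have hn : ‖z - y‖ = ‖y - z‖ := norm_sub_rev _ _
  rw [hn] at h2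
  have hi : (⟪gradient f y - gradient f z, y - z⟫ : ℝ)
      = ⟪gradient f y, y - z⟫ - ⟪gradient f z, y - z⟫ := inner_sub_left _ _ _
  have hneg : (⟪gradient f y, z - y⟫ : ℝ) = -⟪gradient f y, y - z⟫ := by
    rw [← inner_neg_right]
    congr 1
    module
  rw [hneg] at h2
  rw [hi]
  linarith

lemma aux_limit {C D : ℝ} (hC : 0 ≤ C)
    (hstep : ∀ l : ℝ, 0 < l → l < 1 → (1 - l) * C ≤ D) : C ≤ D := by
  rcases eq_or_lt_of_le hC with hC0 | hC0
  · have := hstep (1/2) (by norm_num) (by norm_num)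
    rw [← hC0] at this ⊢
    linarith
  · by_contra hcon
    push_neg at hcon
    have hD0 : C / 2 ≤ D := by
      have := hstep (1/2) (by norm_num) (by norm_num)
      linarith
    have hl0 : 0 < (C - D) / (2 * C) := div_pos (by linarith) (by linarith)
    have hl1 : (C - D) / (2 * C) < 1 := by
      rw [div_lt_one (by linarith)]
      linarith
    have hcontr := hstep _ hl0 hl1
    have he : (1 - (C - D) / (2 * C)) * C = C - (C - D) / 2 := by
      field_simp
    rw [he] at hcontr
    linarith

lemma aux_combo (l : ℝ) (hl0 : 0 < l) (hl1 : l < 1) (a b : E) :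
    ‖(1 - l) • a + l • b‖ ^ 2
      = (1 - l) * ‖a‖ ^ 2 + l * ‖b‖ ^ 2 - l * (1 - l) * ‖a - b‖ ^ 2 := by
  rw [norm_add_sq_real, norm_sub_sq_real, norm_smul, norm_smul,
    real_inner_smul_left, real_inner_smul_right]
  rw [Real.norm_eq_abs, Real.norm_eq_abs, abs_of_pos (by linarith : (0:ℝ) < 1 - l),
    abs_of_pos hl0]
  ring

lemma aux_prox_nonexp {h : E → ℝ} (hconv : ConvexOn ℝ Set.univ h) {t : ℝ} (ht : 0 < t)
    (P : E → E) (hP : ∀ v, IsMinOn (fun u => t * h u + ‖u - v‖ ^ 2 / 2) Set.univ (P v))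
    (v w : E) : ‖P v - P w‖ ≤ ‖v - w‖ := by
  have key : ∀ v u : E, t * h (P v) + ‖P v - v‖ ^ 2 / 2 + ‖u - P v‖ ^ 2 / 2
      ≤ t * h u + ‖u - v‖ ^ 2 / 2 := by
    intro v u
    set p := P v with hp
    have hstep : ∀ l : ℝ, 0 < l → l < 1 →
        (1 - l) * (‖u - p‖ ^ 2 / 2)
        ≤ t * h u + ‖u - v‖ ^ 2 / 2 - (t * h p + ‖p - v‖ ^ 2 / 2) := by
      intro l hl0 hl1
      have hm := hconv.2 (mem_univ p) (mem_univ u)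
        (show (0:ℝ) ≤ 1 - l by linarith) hl0.le (by ring)
      have e : ((1 - l) • p + l • u) - v = (1 - l) • (p - v) + l • (u - v) := by
        simp only [smul_sub]
        module
      have hab : (p - v) - (u - v) = p - u := by module
      have hq : ‖((1 - l) • p + l • u) - v‖ ^ 2
          = (1 - l) * ‖p - v‖ ^ 2 + l * ‖u - v‖ ^ 2 - l * (1 - l) * ‖p - u‖ ^ 2 := by
        rw [e, aux_combo l hl0 hl1 (p - v) (u - v), hab]
      have hmin := hP v (mem_univ ((1 - l) • p + l • u))
      have hmin' : t * h p + ‖p - v‖ ^ 2 / 2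
          ≤ t * h ((1 - l) • p + l • u) + ‖((1 - l) • p + l • u) - v‖ ^ 2 / 2 := hmin
      rw [hq] at hmin'
      have hmul : t * h ((1 - l) • p + l • u) ≤ t * ((1 - l) * h p + l * h u) := by
        apply mul_le_mul_of_nonneg_left _ ht.le
        simpa [smul_eq_mul] using hm
      have hnu : ‖u - p‖ = ‖p - u‖ := norm_sub_rev _ _
      rw [hnu]
      nlinarith [hmin', hmul, sq_nonneg ‖p - u‖]
    have := aux_limit (by positivity) hstep
    linarith
  have k1 := key v (P w)
  have k2 := key w (P v)
  set a := P v with hav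
  set b := P w with hbw
  have expand : ∀ p q : E, ‖p - q‖ ^ 2 = ‖p‖ ^ 2 - 2 * ⟪p, q⟫ + ‖q‖ ^ 2 := fun p q => by
    rw [norm_sub_sq_real]
  have hfirm : ‖a - b‖ ^ 2 ≤ ⟪a - b, v - w⟫ := by
    rw [expand a v, expand b a, expand b v] at k1
    rw [expand b w, expand a b, expand a w] at k2
    rw [expand a b, inner_sub_left, inner_sub_right, inner_sub_right]
    have c1 : (⟪b, a⟫ : ℝ) = ⟪a, b⟫ := real_inner_comm _ _
    rw [c1] at k1
    linarith [k1, k2]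
  have hcs : (⟪a - b, v - w⟫ : ℝ) ≤ ‖a - b‖ * ‖v - w‖ := real_inner_le_norm _ _
  nlinarith [norm_nonneg (a - b), norm_nonneg (v - w), hfirm, hcs]

variable {t' : ℝ}

lemma aux_contraction (α β t : ℝ) (hα : 0 < α) (hαβ : α ≤ β) (f : E → ℝ)
    (hsc : ConvexOn ℝ Set.univ (fun z => f z - α / 2 * ‖z‖ ^ 2))
    (hf : Differentiable ℝ f)
    (hlip : LipschitzWith β.toNNReal (fun z => gradient f z))
    (ht0 : 0 < t') (htβ : t' * β ≤ 1) (z w : E) :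
    ‖(z - t' • gradient f z) - (w - t' • gradient f w)‖ ^ 2 ≤ (1 - t' * α) * ‖z - w‖ ^ 2 := by
  have hβ : 0 < β := hα.trans_le hαβ
  have hmono := aux_mono α f hsc hf w z
  have hcoco := aux_coco α β hα hαβ f hsc hf hlip w z
  have he : (z - t' • gradient f z) - (w - t' • gradient f w)
      = (z - w) - t' • (gradient f z - gradient f w) := by
    rw [smul_sub]
    module
  rw [he, norm_sub_sq_real, norm_smul, real_inner_smul_right, Real.norm_eq_abs,
    abs_of_pos ht0]
  have hcm : (⟪z - w, gradient f z - gradient f w⟫ : ℝ)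
      = ⟪gradient f z - gradient f w, z - w⟫ := real_inner_comm _ _
  rw [hcm, mul_pow]
  set D := (⟪gradient f z - gradient f w, z - w⟫ : ℝ) with hD
  have hDnn : 0 ≤ D := le_trans (mul_nonneg hα.le (sq_nonneg _)) hmono
  have h1 : t' ^ 2 * ‖gradient f z - gradient f w‖ ^ 2 ≤ t' ^ 2 * (β * D) := by
    have hb2 : ‖gradient f z - gradient f w‖ ^ 2 ≤ β * D := by
      have hmul := mul_le_mul_of_nonneg_left hcoco hβ.le
      have hone : β * (1 / β) = 1 := mul_one_div_cancel hβ.ne'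
      nlinarith [hmul, hone]
    nlinarith [sq_nonneg t']
  have h2 : t' ^ 2 * (β * D) ≤ t' * D := by
    have k : t' * β * D ≤ D := by nlinarith [mul_le_mul_of_nonneg_right htβ hDnn]
    nlinarith [mul_le_mul_of_nonneg_left k ht0.le]
  have h3 : t' * (α * ‖z - w‖ ^ 2) ≤ t' * D := by
    nlinarith
  nlinarith

set_option maxHeartbeats 1600000 in
/-- Lemma 3.3(ii): strict monotonicity of
`φ̄_{t,x,c}(s) = ⟨z⁺ − z, x − c⟩` at `z = x + s(c − x)`, where `z⁺ = P (z − t∇f(z))`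
and `P v = Prox_{th}(v)`. Quantitatively, for `s₁ < s₂`,
`φ̄(s₂) − φ̄(s₁) ≥ (αt/2)(s₂ − s₁)‖x − c‖² > 0`. -/
theorem stmt_7 (n : ℕ) (α β t : ℝ) (hα : 0 < α) (hαβ : α ≤ β)
    (f h : EuclideanSpace ℝ (Fin n) → ℝ)
    (hsc : ConvexOn ℝ Set.univ (fun z => f z - α / 2 * ‖z‖ ^ 2))
    (hf : Differentiable ℝ f)
    (hlip : LipschitzWith β.toNNReal (fun z => gradient f z))
    (hconv : ConvexOn ℝ Set.univ h) (hlsc : LowerSemicontinuous h)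
    (ht : t ∈ Set.Ioc (0 : ℝ) (1 / β))
    (P : EuclideanSpace ℝ (Fin n) → EuclideanSpace ℝ (Fin n))
    (hP : ∀ v, IsMinOn (fun u => t * h u + ‖u - v‖ ^ 2 / 2) Set.univ (P v))
    (x c : EuclideanSpace ℝ (Fin n)) (hxc : x ≠ c)
    (φbar : ℝ → ℝ)
    (hφbar : ∀ s : ℝ,
      φbar s = ⟪P ((x + s • (c - x)) - t • gradient f (x + s • (c - x))) - (x + s • (c - x)),
        x - c⟫) :
    ∀ s₁ s₂ : ℝ, s₁ < s₂ →
      φbar s₂ - φbar s₁ ≥ α * t / 2 * (s₂ - s₁) * ‖x - c‖ ^ 2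
        ∧ 0 < α * t / 2 * (s₂ - s₁) * ‖x - c‖ ^ 2 := by
  intro s₁ s₂ hs
  have hβ : 0 < β := hα.trans_le hαβ
  have ht0 : 0 < t := ht.1
  have htβ : t * β ≤ 1 := by
    have := ht.2
    rw [le_div_iff₀ hβ] at this
    linarith
  have htα : t * α ≤ 1 := le_trans (by nlinarith) htβ
  have hnpos : 0 < ‖x - c‖ := by
    rw [norm_pos_iff]
    exact sub_ne_zero.mpr hxc
  -- notation
  have hpos : 0 < α * t / 2 * (s₂ - s₁) * ‖x - c‖ ^ 2 :=
    mul_pos (mul_pos (div_pos (mul_pos hα ht0) two_pos) (sub_pos.mpr hs))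
      (pow_pos hnpos 2)
  refine ⟨?_, hpos⟩
  set z₁ := x + s₁ • (c - x) with hz1
  set z₂ := x + s₂ • (c - x) with hz2
  set w₁ := z₁ - t • gradient f z₁ with hw1
  set w₂ := z₂ - t • gradient f z₂ with hw2
  set p₁ := P w₁ with hp1
  set p₂ := P w₂ with hp2
  have hznorm : ‖z₂ - z₁‖ = (s₂ - s₁) * ‖x - c‖ := by
    have he : z₂ - z₁ = (s₂ - s₁) • (c - x) := by
      rw [hz1, hz2]
      module
    rw [he, norm_smul, Real.norm_eq_abs, abs_of_pos (sub_pos.mpr hs), norm_sub_rev]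
  have hcontr : ‖w₂ - w₁‖ ^ 2 ≤ (1 - t * α) * ‖z₂ - z₁‖ ^ 2 :=
    aux_contraction α β t hα hαβ f hsc hf hlip ht0 htβ z₂ z₁
  have hpn : ‖p₂ - p₁‖ ≤ ‖w₂ - w₁‖ := aux_prox_nonexp hconv ht0 P hP w₂ w₁
  have hRnn : 0 ≤ (s₂ - s₁) * ‖x - c‖ := mul_nonneg (sub_pos.mpr hs).le (norm_nonneg _)
  have hw : ‖w₂ - w₁‖ ≤ (1 - t * α / 2) * ((s₂ - s₁) * ‖x - c‖) := by
    rw [hznorm] at hcontr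
    have hb0 : (0:ℝ) ≤ 1 - t * α / 2 := by linarith
    have hbig : ‖w₂ - w₁‖ ^ 2 ≤ ((1 - t * α / 2) * ((s₂ - s₁) * ‖x - c‖)) ^ 2 := by
      nlinarith [hcontr, mul_nonneg (sq_nonneg (t * α)) (sq_nonneg ((s₂ - s₁) * ‖x - c‖))]
    nlinarith [hbig, norm_nonneg (w₂ - w₁), mul_nonneg hb0 hRnn]
  have hple : ‖p₂ - p₁‖ ≤ (1 - t * α / 2) * ((s₂ - s₁) * ‖x - c‖) := hpn.trans hw
  -- difference formula
  have hdiff : φbar s₂ - φbar s₁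
      = ⟪p₂ - p₁, x - c⟫ + (s₂ - s₁) * ‖x - c‖ ^ 2 := by
    rw [hφbar s₂, hφbar s₁, ← hz1, ← hz2, ← hw1, ← hw2, ← hp1, ← hp2]
    rw [← inner_sub_left]
    have e2 : (p₂ - z₂) - (p₁ - z₁) = (p₂ - p₁) + (s₁ - s₂) • (c - x) := by
      rw [hz1, hz2]
      module
    rw [e2, inner_add_left, real_inner_smul_left]
    have e3 : (⟪c - x, x - c⟫ : ℝ) = -(‖x - c‖ ^ 2) := by
      have : c - x = -(x - c) := by module
      rw [this, inner_neg_left, real_inner_self_eq_norm_sq]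
    rw [e3]
    ring
  have hib : -(‖p₂ - p₁‖ * ‖x - c‖) ≤ (⟪p₂ - p₁, x - c⟫ : ℝ) := by
    have := abs_real_inner_le_norm (p₂ - p₁) (x - c)
    have h2 := neg_abs_le (⟪p₂ - p₁, x - c⟫ : ℝ)
    linarith
  have hpp : ‖p₂ - p₁‖ * ‖x - c‖
      ≤ (1 - t * α / 2) * ((s₂ - s₁) * ‖x - c‖) * ‖x - c‖ :=
    mul_le_mul_of_nonneg_right hple hnpos.le
  rw [ge_iff_le, hdiff]
  nlinarith [hib, hpp]
end

section
/- (Convergence of GeoPG.) Let t ∈ (0, 1/β]. Let {x_k}_{k≥0} ⊆ ℝ^n, {c_k}_{k≥0} ⊆ ℝ^n and {R_k²}_{k≥0} ⊆ ℝ be sequences with c_0 = x_0^{++} and R_0² = (1 − αt)·‖G_t(x_0)‖²/α². Assume for every k ≥ 1: (a) F(x_k⁺) ≤ F(x_{k−1}⁺) − (t/2)·‖G_t(x_k)‖² and ‖x_k^{++} − c_{k−1}‖² ≥ ‖G_t(x_k)‖²/α²; (b) R_k² = (1 − √(αt))·R_{k−1}² and, for every δ ≥ 0, B(c_{k−1},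 R_{k−1}² − (t/α)·‖G_t(x_k)‖² − δ) ∩ B(x_k^{++}, (1 − αt)·‖G_t(x_k)‖²/α² − δ) ⊆ B(c_k, R_k² − δ). Then for every k ≥ 0: x* ∈ B(c_k, R_k² − (2/α)·(F(x_k⁺) − F*)); consequently ‖x* − c_k‖² ≤ (1 − √(αt))^k · R_0² and F(x_{k+1}⁺) − F* ≤ (α/2)·(1 − √(αt))^k · R_0². -/
open scoped RealInnerProductSpace
open Set

variable {n : ℕ}


lemma lineDeriv_aux (f : EuclideanSpace ℝ (Fin n) → ℝ) (hf : Differentiable ℝ f)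
    (x v : EuclideanSpace ℝ (Fin n)) (s : ℝ) :
    HasDerivAt (fun s : ℝ => f (x + s • v)) ⟪gradient f (x + s • v), v⟫ s := by
  have h1 : HasFDerivAt f ((InnerProductSpace.toDual ℝ _) (gradient f (x + s • v))) (x + s • v) :=
    hasGradientAt_iff_hasFDerivAt.mp (hf _).hasGradientAt
  have h2 : HasDerivAt (fun s : ℝ => x + s • v) v s := by
    simpa using ((hasDerivAt_id s).smul_const v).const_add x
  have h3 := h1.comp_hasDerivAt s h2
  simp only [InnerProductSpace.toDual_apply_apply] at h3
  exact h3

lemma convex_slope_aux {φ : EuclideanSpace ℝ (Fin n) → ℝ} (hφ : ConvexOn ℝ Set.univ φ)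
    {x v : EuclideanSpace ℝ (Fin n)} {D : ℝ}
    (hD : HasDerivAt (fun s : ℝ => φ (x + s • v)) D 0) : D ≤ φ (x + v) - φ x := by
  set ψ := fun s : ℝ => φ (x + s • v) with hψ
  have htend : Filter.Tendsto (slope ψ 0) (nhdsWithin 0 (Set.Ioi 0)) (nhds D) :=
    (hasDerivAt_iff_tendsto_slope.mp hD).mono_left
      (nhdsWithin_mono _ (fun s hs => ne_of_gt hs))
  refine le_of_tendsto htend ?_
  filter_upwards [Ioc_mem_nhdsGT_of_mem (by constructor <;> norm_num : (0:ℝ) ∈ Set.Ico 0 1)]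
    with s hs
  have hcvx := hφ.2 (Set.mem_univ x) (Set.mem_univ (x + v))
    (by linarith [hs.2] : (0:ℝ) ≤ 1 - s) hs.1.le (by ring)
  have heq : (1 - s) • x + s • (x + v) = x + s • v := by
    rw [smul_add, sub_smul, one_smul]; abel
  rw [heq] at hcvx
  have : ψ s - ψ 0 ≤ s * (φ (x + v) - φ x) := by
    simp only [smul_eq_mul] at hcvx
    simp only [hψ, zero_smul, add_zero]
    nlinarith
  rw [slope_def_field, sub_zero, div_le_iff₀ hs.1]
  nlinarith

lemma norm_add_smul_sq (x v : EuclideanSpace ℝ (Fin n)) (s : ℝ) :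
    ‖x + s • v‖ ^ 2 = ‖x‖ ^ 2 + s * (2 * ⟪x, v⟫) + s ^ 2 * ‖v‖ ^ 2 := by
  rw [norm_add_sq_real, real_inner_smul_right, norm_smul]
  simp [mul_pow, sq_abs]
  ring

/-- strong convexity gradient inequality -/
lemma strong_grad_aux {α : ℝ} (f : EuclideanSpace ℝ (Fin n) → ℝ)
    (hsc : ConvexOn ℝ Set.univ (fun z => f z - α / 2 * ‖z‖ ^ 2))
    (hf : Differentiable ℝ f) (x v : EuclideanSpace ℝ (Fin n)) :
    f x + ⟪gradient f x, v⟫ + α / 2 * ‖v‖ ^ 2 ≤ f (x + v) := by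
  have hq : HasDerivAt (fun s : ℝ => α / 2 * ‖x + s • v‖ ^ 2) (α * ⟪x, v⟫) 0 := by
    have h0 : HasDerivAt (fun s : ℝ =>
        α / 2 * (‖x‖ ^ 2 + s * (2 * ⟪x, v⟫) + s ^ 2 * ‖v‖ ^ 2)) (α * ⟪x, v⟫) 0 := by
      have h1 : HasDerivAt (fun s : ℝ => s * (2 * ⟪x, v⟫)) (2 * ⟪x, v⟫) 0 := by
        simpa using (hasDerivAt_id (0:ℝ)).mul_const (2 * ⟪x, v⟫)
      have h2 : HasDerivAt (fun s : ℝ => s ^ 2 * ‖v‖ ^ 2) 0 0 := by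
        simpa using (hasDerivAt_pow 2 (0:ℝ)).mul_const (‖v‖ ^ 2)
      have := (((hasDerivAt_const (0:ℝ) (‖x‖ ^ 2)).add h1).add h2).const_mul (α / 2)
      refine this.congr_deriv ?_
      ring
    have : (fun s : ℝ => α / 2 * ‖x + s • v‖ ^ 2)
        = fun s : ℝ => α / 2 * (‖x‖ ^ 2 + s * (2 * ⟪x, v⟫) + s ^ 2 * ‖v‖ ^ 2) := by
      funext s; rw [norm_add_smul_sq]
    rw [this]; exact h0
  have hD : HasDerivAt (fun s : ℝ => f (x + s • v) - α / 2 * ‖x + s • v‖ ^ 2)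
      (⟪gradient f x, v⟫ - α * ⟪x, v⟫) 0 := by
    have := (lineDeriv_aux f hf x v 0).sub hq
    simp only [zero_smul, add_zero] at this
    exact this
  have := convex_slope_aux hsc hD
  have hexp := norm_add_smul_sq x v 1
  simp only [one_smul, one_pow, one_mul] at hexp
  rw [hexp] at this
  nlinarith [this]

/-- descent lemma from Lipschitz gradient -/
lemma descent_aux {β : ℝ} (hβ : 0 < β) (f : EuclideanSpace ℝ (Fin n) → ℝ)
    (hf : Differentiable ℝ f)
    (hlip : LipschitzWith β.toNNReal (fun z => gradient f z))
    (x v : EuclideanSpace ℝ (Fin n)) :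
    f (x + v) ≤ f x + ⟪gradient f x, v⟫ + β / 2 * ‖v‖ ^ 2 := by
  set g := gradient f x with hg
  set χ := fun s : ℝ => f (x + s • v) - s * ⟪g, v⟫ - β * s ^ 2 / 2 * ‖v‖ ^ 2 with hχ
  have hder : ∀ s : ℝ, HasDerivAt χ
      (⟪gradient f (x + s • v), v⟫ - ⟪g, v⟫ - β * s * ‖v‖ ^ 2) s := by
    intro s
    have h1 : HasDerivAt (fun s : ℝ => s * ⟪g, v⟫) ⟪g, v⟫ s := by
      simpa using (hasDerivAt_id s).mul_const ⟪g, v⟫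
    have h2 : HasDerivAt (fun s : ℝ => β * s ^ 2 / 2 * ‖v‖ ^ 2) (β * s * ‖v‖ ^ 2) s := by
      have := ((hasDerivAt_pow 2 s).const_mul (β / 2)).mul_const (‖v‖ ^ 2)
      have e : (fun s : ℝ => β * s ^ 2 / 2 * ‖v‖ ^ 2) = fun y => β / 2 * y ^ 2 * ‖v‖ ^ 2 := by
        funext y; ring
      rw [e]
      exact this.congr_deriv (by rw [show (2:ℕ) - 1 = 1 from rfl]; push_cast; ring)
    rw [hχ]
    exact ((lineDeriv_aux f hf x v s).sub h1).sub h2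
  have hbound : ∀ s ∈ interior (Set.Icc (0:ℝ) 1), deriv χ s ≤ 0 := by
    intro s hs
    rw [interior_Icc] at hs
    rw [(hder s).deriv]
    have hinn : ⟪gradient f (x + s • v) - g, v⟫ ≤ ‖gradient f (x + s • v) - g‖ * ‖v‖ :=
      real_inner_le_norm _ _
    have hl : ‖gradient f (x + s • v) - g‖ ≤ β * (s * ‖v‖) := by
      have := hlip.dist_le_mul (x + s • v) x
      rw [dist_eq_norm, dist_eq_norm] at this
      simp only [add_sub_cancel_left] at this
      rw [hg]
      calc ‖gradient f (x + s • v) - gradient f x‖ ≤ β.toNNReal * ‖s • v‖ := by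
            simpa [dist_eq_norm] using this
        _ ≤ β * (s * ‖v‖) := by
            rw [norm_smul, Real.coe_toNNReal _ hβ.le, Real.norm_eq_abs,
              abs_of_pos hs.1]
    rw [inner_sub_left] at hinn
    nlinarith [norm_nonneg v, hs.1.le]
  have hcont : ContinuousOn χ (Set.Icc 0 1) :=
    fun s _ => ((hder s).continuousAt).continuousWithinAt
  have hdiff : DifferentiableOn ℝ χ (interior (Set.Icc (0:ℝ) 1)) :=
    fun s _ => ((hder s).differentiableAt).differentiableWithinAt
  have := Convex.image_sub_le_mul_sub_of_deriv_le (convex_Icc (0:ℝ) 1) hcont hdiff hbound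
    0 (by norm_num) 1 (by norm_num) (by norm_num)
  simp only [hχ, zero_smul, add_zero, one_smul, mul_zero, zero_mul, sub_zero, one_pow, mul_one,
    ne_eq] at this
  nlinarith [this]


/-- prox subgradient inequality -/
lemma prox_aux {t : ℝ} (ht0 : 0 < t) (h : EuclideanSpace ℝ (Fin n) → ℝ)
    (hconv : ConvexOn ℝ Set.univ h)
    (P : EuclideanSpace ℝ (Fin n) → EuclideanSpace ℝ (Fin n))
    (hP : ∀ v, IsMinOn (fun u => t * h u + ‖u - v‖ ^ 2 / 2) Set.univ (P v))
    (v y : EuclideanSpace ℝ (Fin n)) :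
    ⟪v - P v, y - P v⟫ ≤ t * (h y - h (P v)) := by
  set p := P v with hp
  set w := y - p with hw
  have key : ∀ s : ℝ, 0 < s → s ≤ 1 →
      0 ≤ t * (h y - h p) + ⟪p - v, w⟫ + s / 2 * ‖w‖ ^ 2 := by
    intro s hs0 hs1
    have hmin := (hP v) (Set.mem_univ (p + s • w))
    simp only at hmin
    have hnorm : ‖p + s • w - v‖ ^ 2 = ‖p - v‖ ^ 2 + s * (2 * ⟪p - v, w⟫) + s ^ 2 * ‖w‖ ^ 2 := by
      have : p + s • w - v = (p - v) + s • w := by abel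
      rw [this, norm_add_sq_real, real_inner_smul_right, norm_smul]
      simp [mul_pow, sq_abs]; ring
    have hcvx : h (p + s • w) ≤ (1 - s) * h p + s * h y := by
      have := hconv.2 (Set.mem_univ p) (Set.mem_univ y)
        (by linarith : (0:ℝ) ≤ 1 - s) hs0.le (by ring)
      simp only [smul_eq_mul] at this
      have heq : (1 - s) • p + s • y = p + s • w := by
        rw [hw, smul_sub, sub_smul, one_smul]; abel
      rwa [heq] at this
    have h1 : t * h p + ‖p - v‖ ^ 2 / 2 ≤ t * h (p + s • w) + ‖p + s • w - v‖ ^ 2 / 2 := hmin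
    rw [hnorm] at h1
    have h2 : t * h (p + s • w) ≤ t * ((1 - s) * h p + s * h y) :=
      mul_le_mul_of_nonneg_left hcvx ht0.le
    -- 0 ≤ t*s*(h y - h p) + s*⟪p-v,w⟫ + s^2/2*‖w‖^2
    have h3 : 0 ≤ t * s * (h y - h p) + s * ⟪p - v, w⟫ + s ^ 2 / 2 * ‖w‖ ^ 2 := by nlinarith
    have := div_nonneg h3 hs0.le  -- not quite; divide by s
    nlinarith [h3, hs0, mul_pos hs0 hs0]
  have main : 0 ≤ t * (h y - h p) + ⟪p - v, w⟫ := by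
    by_contra hcon
    push_neg at hcon
    set X := t * (h y - h p) + ⟪p - v, w⟫ with hX
    have hw2 : 0 ≤ ‖w‖ ^ 2 := sq_nonneg _
    rcases eq_or_lt_of_le hw2 with hz | hz
    · have := key 1 one_pos le_rfl
      rw [← hz] at this
      simp at this
      linarith
    · set s := min 1 (-X / ‖w‖ ^ 2) with hs
      have hXpos : 0 < -X := by linarith
      have hs0 : 0 < s := lt_min one_pos (div_pos hXpos hz)
      have hs1 : s ≤ 1 := min_le_left _ _
      have := key s hs0 hs1
      have hsle : s ≤ -X / ‖w‖ ^ 2 := min_le_right _ _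
      have hbd : s * ‖w‖ ^ 2 ≤ -X := by
        have := mul_le_mul_of_nonneg_right hsle hw2
        rwa [div_mul_cancel₀ _ (ne_of_gt hz)] at this
      nlinarith [key s hs0 hs1]
  have : ⟪v - p, w⟫ = -⟪p - v, w⟫ := by
    rw [← inner_neg_left]; congr 1; abel
  rw [hw] at main ⊢
  rw [this] at *
  linarith [main]

/-- key lemma: x* style ball inequality -/
lemma key_aux {α β t : ℝ} (hα : 0 < α) (hβ : 0 < β) (hβt : β * t ≤ 1) (ht0 : 0 < t)
    (f h : EuclideanSpace ℝ (Fin n) → ℝ)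
    (hsc : ConvexOn ℝ Set.univ (fun z => f z - α / 2 * ‖z‖ ^ 2))
    (hf : Differentiable ℝ f)
    (hlip : LipschitzWith β.toNNReal (fun z => gradient f z))
    (hconv : ConvexOn ℝ Set.univ h)
    (P : EuclideanSpace ℝ (Fin n) → EuclideanSpace ℝ (Fin n))
    (hP : ∀ v, IsMinOn (fun u => t * h u + ‖u - v‖ ^ 2 / 2) Set.univ (P v))
    (z p Gv pp y : EuclideanSpace ℝ (Fin n))
    (hp : p = P (z - t • gradient f z)) (hGv : Gv = t⁻¹ • (z - p))
    (hpp : pp = z - α⁻¹ • Gv) :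
    ‖y - pp‖ ^ 2 ≤ (1 - α * t) * ‖Gv‖ ^ 2 / α ^ 2
      - 2 / α * ((f p + h p) - (f y + h y)) := by
  set g := gradient f z with hg
  have hzp : z - p = t • Gv := by
    rw [hGv, smul_smul, mul_inv_cancel₀ (ne_of_gt ht0), one_smul]
  set a := ⟪g, Gv⟫ with ha
  set b := ⟪g, y - z⟫ with hb
  set cI := ⟪Gv, y - z⟫ with hcI
  set n2 := ‖Gv‖ ^ 2 with hn2
  set m2 := ‖y - z‖ ^ 2 with hm2
  -- (1) descent
  have h1 : f p ≤ f z - t * a + β * t ^ 2 / 2 * n2 := by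
    have := descent_aux hβ f hf hlip z (p - z)
    have he : z + (p - z) = p := by abel
    rw [he] at this
    have he2 : p - z = -(t • Gv) := by rw [← hzp]; abel
    rw [he2] at this
    rw [inner_neg_right, real_inner_smul_right, norm_neg, norm_smul] at this
    simp only [Real.norm_eq_abs] at this
    calc f p ≤ f z + -(t * a) + β / 2 * (|t| * ‖Gv‖) ^ 2 := this
      _ = f z - t * a + β * t ^ 2 / 2 * n2 := by rw [mul_pow, sq_abs, hn2]; ring
  -- (2) strong convexity
  have h2 : f z + b + α / 2 * m2 ≤ f y := by
    have := strong_grad_aux f hsc hf z (y - z)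
    have he : z + (y - z) = y := by abel
    rw [he] at this
    exact this
  -- (3) prox
  have h3 : cI + t * n2 - b - t * a ≤ h y - h p := by
    have := prox_aux ht0 h hconv P hP (z - t • g) y
    rw [← hp] at this
    have he : z - t • g - p = t • (Gv - g) := by
      rw [smul_sub, ← hzp]; abel
    have he2 : y - p = (y - z) + t • Gv := by rw [← hzp]; abel
    rw [he, he2, real_inner_smul_left] at this
    rw [inner_add_right, inner_sub_left, inner_sub_left, real_inner_smul_right,
      real_inner_smul_right] at this
    rw [real_inner_self_eq_norm_sq] at this
    have := (mul_le_mul_iff_right₀ ht0).mp this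
    rw [← hcI, ← hb, ← ha, ← hn2] at this
    linarith
  -- combine
  have hprod : 0 ≤ (1 - β * t) * t * ‖Gv‖ ^ 2 :=
    mul_nonneg (mul_nonneg (by linarith) ht0.le) (sq_nonneg _)
  rw [← hn2] at hprod
  have hsum : (f p + h p) - (f y + h y) ≤ -cI - α / 2 * m2 - t / 2 * n2 := by
    nlinarith [hprod]
  -- expand left norm
  have hexp : ‖y - pp‖ ^ 2 = m2 + 2 * α⁻¹ * cI + α⁻¹ ^ 2 * n2 := by
    have he : y - pp = (y - z) + α⁻¹ • Gv := by rw [hpp]; abel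
    rw [he, norm_add_sq_real, real_inner_smul_right, norm_smul]
    simp only [Real.norm_eq_abs]
    rw [mul_pow, sq_abs, real_inner_comm]
    rw [hm2, hn2, hcI]
    ring
  rw [hexp]
  have hαne : α ≠ 0 := ne_of_gt hα
  have key2 : 2 / α * ((f p + h p) - (f y + h y)) ≤ 2 / α * (-cI - α / 2 * m2 - t / 2 * n2) :=
    mul_le_mul_of_nonneg_left hsum (by positivity)
  have e1 : 2 / α * (-cI - α / 2 * m2 - t / 2 * n2) = -(2 * α⁻¹ * cI) - m2 - t / α * n2 := by
    field_simp
  have e2 : (1 - α * t) * n2 / α ^ 2 = α⁻¹ ^ 2 * n2 - t / α * n2 := by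
    field_simp
  rw [e1] at key2
  rw [e2]
  linarith [key2]



open scoped RealInnerProductSpace

/-- convergence of GeoPG. Here `P v = Prox_{th}(v)`,
`xp k = (x k)⁺`, `G k = G_t(x k)`, `xpp k = (x k)^{++}`, and `F = f + h` with
minimizer `x*`. -/
theorem stmt_13 (n : ℕ) (α β t : ℝ) (hα : 0 < α) (hαβ : α ≤ β)
    (f h : EuclideanSpace ℝ (Fin n) → ℝ)
    (hsc : ConvexOn ℝ Set.univ (fun z => f z - α / 2 * ‖z‖ ^ 2))
    (hf : Differentiable ℝ f)
    (hlip : LipschitzWith β.toNNReal (fun z => gradient f z))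
    (hconv : ConvexOn ℝ Set.univ h) (hlsc : LowerSemicontinuous h)
    (ht : t ∈ Set.Ioc (0 : ℝ) (1 / β))
    (xstar : EuclideanSpace ℝ (Fin n))
    (hmin : IsMinOn (fun z => f z + h z) Set.univ xstar)
    (P : EuclideanSpace ℝ (Fin n) → EuclideanSpace ℝ (Fin n))
    (hP : ∀ v, IsMinOn (fun u => t * h u + ‖u - v‖ ^ 2 / 2) Set.univ (P v))
    (x c xp G xpp : ℕ → EuclideanSpace ℝ (Fin n)) (R2 : ℕ → ℝ)
    (hxp : ∀ k, xp k = P (x k - t • gradient f (x k)))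
    (hG : ∀ k, G k = t⁻¹ • (x k - xp k))
    (hxpp : ∀ k, xpp k = x k - α⁻¹ • G k)
    (hc0 : c 0 = xpp 0)
    (hR0 : R2 0 = (1 - α * t) * ‖G 0‖ ^ 2 / α ^ 2)
    (ha : ∀ k, 1 ≤ k →
      f (xp k) + h (xp k) ≤ (f (xp (k - 1)) + h (xp (k - 1))) - t / 2 * ‖G k‖ ^ 2
        ∧ ‖xpp k - c (k - 1)‖ ^ 2 ≥ ‖G k‖ ^ 2 / α ^ 2)
    (hb1 : ∀ k, 1 ≤ k → R2 k = (1 - Real.sqrt (α * t)) * R2 (k - 1))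
    (hb2 : ∀ k, 1 ≤ k → ∀ δ : ℝ, 0 ≤ δ →
      B (c (k - 1)) (R2 (k - 1) - t / α * ‖G k‖ ^ 2 - δ)
          ∩ B (xpp k) ((1 - α * t) * ‖G k‖ ^ 2 / α ^ 2 - δ)
        ⊆ B (c k) (R2 k - δ)) :
    ∀ k : ℕ,
      xstar ∈ B (c k) (R2 k - 2 / α * ((f (xp k) + h (xp k)) - (f xstar + h xstar)))
        ∧ ‖xstar - c k‖ ^ 2 ≤ (1 - Real.sqrt (α * t)) ^ k * R2 0
        ∧ (f (xp (k + 1)) + h (xp (k + 1))) - (f xstar + h xstar)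
            ≤ α / 2 * (1 - Real.sqrt (α * t)) ^ k * R2 0 := by
  obtain ⟨ht0, ht1⟩ := ht
  have hβ : 0 < β := lt_of_lt_of_le hα hαβ
  have hβt : β * t ≤ 1 := by
    rw [le_div_iff₀ hβ] at ht1; linarith
  have hαt : α * t ≤ 1 := le_trans (mul_le_mul_of_nonneg_right hαβ ht0.le) hβt
  have hαt0 : 0 ≤ α * t := mul_nonneg hα.le ht0.le
  have hsq1 : Real.sqrt (α * t) ≤ 1 := Real.sqrt_le_one.2 hαt
  have hsq0 : 0 ≤ 1 - Real.sqrt (α * t) := by linarith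
  have hR20 : 0 ≤ R2 0 := by
    rw [hR0]
    apply div_nonneg (mul_nonneg (by linarith) (sq_nonneg _)) (sq_nonneg _)
  have hRf : ∀ k, R2 k = (1 - Real.sqrt (α * t)) ^ k * R2 0 := by
    intro k
    induction k with
    | zero => simp
    | succ k ih =>
      rw [hb1 (k + 1) (Nat.le_add_left 1 k)]
      simp only [Nat.add_sub_cancel]
      rw [ih, pow_succ]
      ring
  have hFstar : ∀ y, f xstar + h xstar ≤ f y + h y := fun y => hmin (Set.mem_univ y)
  have keyk : ∀ k, ‖xstar - xpp k‖ ^ 2 ≤ (1 - α * t) * ‖G k‖ ^ 2 / α ^ 2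
      - 2 / α * ((f (xp k) + h (xp k)) - (f xstar + h xstar)) := fun k =>
    key_aux hα hβ hβt ht0 f h hsc hf hlip hconv P hP (x k) (xp k) (G k) (xpp k) xstar
      (hxp k) (hG k) (hxpp k)
  have hδ : ∀ k, 0 ≤ 2 / α * ((f (xp k) + h (xp k)) - (f xstar + h xstar)) := fun k =>
    mul_nonneg (by positivity) (by linarith [hFstar (xp k)])
  have hmem : ∀ k, xstar ∈ B (c k)
      (R2 k - 2 / α * ((f (xp k) + h (xp k)) - (f xstar + h xstar))) := by
    intro k
    induction k with
    | zero =>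
      show ‖xstar - c 0‖ ^ 2 ≤ _
      rw [hc0, hR0]
      exact keyk 0
    | succ k ih =>
      apply hb2 (k + 1) (Nat.le_add_left 1 k) _ (hδ (k + 1))
      simp only [Nat.add_sub_cancel]
      constructor
      · show ‖xstar - c k‖ ^ 2 ≤ _
        have h1 := (ha (k + 1) (Nat.le_add_left 1 k)).1
        simp only [Nat.add_sub_cancel] at h1
        have h2 : 2 / α * ((f (xp (k + 1)) + h (xp (k + 1))) - (f xstar + h xstar))
            + t / α * ‖G (k + 1)‖ ^ 2
            ≤ 2 / α * ((f (xp k) + h (xp k)) - (f xstar + h xstar)) := by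
          have := mul_le_mul_of_nonneg_left h1 (by positivity : (0:ℝ) ≤ 2 / α)
          have e : 2 / α * (t / 2 * ‖G (k + 1)‖ ^ 2) = t / α * ‖G (k + 1)‖ ^ 2 := by
            field_simp
          nlinarith [this]
        have ih' : ‖xstar - c k‖ ^ 2
            ≤ R2 k - 2 / α * ((f (xp k) + h (xp k)) - (f xstar + h xstar)) := ih
        linarith
      · show ‖xstar - xpp (k + 1)‖ ^ 2 ≤ _
        exact keyk (k + 1)
  intro k
  refine ⟨hmem k, ?_, ?_⟩
  · have h1 : ‖xstar - c k‖ ^ 2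
        ≤ R2 k - 2 / α * ((f (xp k) + h (xp k)) - (f xstar + h xstar)) := hmem k
    rw [hRf k] at h1
    linarith [hδ k]
  · have h1 : ‖xstar - c (k + 1)‖ ^ 2
        ≤ R2 (k + 1) - 2 / α * ((f (xp (k + 1)) + h (xp (k + 1))) - (f xstar + h xstar)) :=
      hmem (k + 1)
    have h2 : 2 / α * ((f (xp (k + 1)) + h (xp (k + 1))) - (f xstar + h xstar))
        ≤ R2 (k + 1) := by nlinarith [sq_nonneg ‖xstar - c (k + 1)‖]
    have h3 : R2 (k + 1) ≤ (1 - Real.sqrt (α * t)) ^ k * R2 0 := by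
      rw [hRf (k + 1), pow_succ]
      have hpk : 0 ≤ (1 - Real.sqrt (α * t)) ^ k := pow_nonneg hsq0 k
      nlinarith [mul_nonneg (mul_nonneg hpk hR20) (Real.sqrt_nonneg (α * t))]
    have h4 : 2 / α * ((f (xp (k + 1)) + h (xp (k + 1))) - (f xstar + h xstar))
        ≤ (1 - Real.sqrt (α * t)) ^ k * R2 0 := le_trans h2 h3
    have := mul_le_mul_of_nonneg_left h4 (by positivity : (0:ℝ) ≤ α / 2)
    have e : α / 2 * (2 / α * ((f (xp (k + 1)) + h (xp (k + 1))) - (f xstar + h xstar)))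
        = (f (xp (k + 1)) + h (xp (k + 1))) - (f xstar + h xstar) := by
      field_simp
    rw [e] at this
    calc (f (xp (k + 1)) + h (xp (k + 1))) - (f xstar + h xstar)
        ≤ α / 2 * ((1 - Real.sqrt (α * t)) ^ k * R2 0) := this
      _ = α / 2 * (1 - Real.sqrt (α * t)) ^ k * R2 0 := by ring
end
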